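/- Non-existence of a type-only encoding of full record subtyping into combined row and presence polymorphism: there is no global, compositional, type-only translation from λ_{[]}^{≤full} to λ_{[]}^{ρθ} that preserves typing. Specifically, for f₁ = λx^{[]}.x and f₂ = λx^{[]}.[] (both of type [] → []), type preservation forces the translated parameter type of f₁ to contain no type variables bound at its outer type abstraction except inside presence-absent label payloads; consequently the upcast f₁ ▷ ([ℓ:[]] → []) admits no type-only translation, since the label ℓ can neither be added to the parameter type by instantiation nor removed again in the body. -/

import Mathlib

namespace Stmt19

abbrev Label := ℕ

/-! ### The source calculus λ_{[]}^{≤full}: records with full structural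
subtyping. -/

/-- Source types. -/
inductive Ty : Type where
  | tvar : ℕ → Ty
  | arrow : Ty → Ty → Ty
  | record : List (Label × Ty) → Ty

/-- Full structural record subtyping: width record subtyping propagated
through all positions, contravariantly through function domains. -/
inductive Sub : Ty → Ty → Prop where
  | tvar (n : ℕ) : Sub (.tvar n) (.tvar n)
  | arrow {A A' B B'} : Sub A' A → Sub B B' → Sub (.arrow A B) (.arrow A' B')
  | record {R R'} :
      (∀ ℓ A', List.lookup ℓ R' = some A' → (List.lookup ℓ R).isSome) →
      (∀ ℓ A A', List.lookup ℓ R = some A → List.lookup ℓ R' = some A' →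
        Sub A A') →
      Sub (.record R) (.record R')

/-- Source terms. -/
inductive Tm : Type where
  | var : ℕ → Tm
  | lam : Ty → Tm → Tm
  | app : Tm → Tm → Tm
  | record : List (Label × Tm) → Tm
  | proj : Tm → Label → Tm
  | upcast : Tm → Ty → Tm

/-! Typing derivations of λ_{[]}^{≤full} as data. -/
mutual
inductive Deriv : List Ty → Tm → Ty → Type where
  | var {Γ n A} : Γ[n]? = some A → Deriv Γ (.var n) A
  | lam {Γ A B M} : Deriv (A :: Γ) M B → Deriv Γ (.lam A M) (.arrow A B)
  | app {Γ A B M N} : Deriv Γ M (.arrow A B) → Deriv Γ N A → Deriv Γ (.app M N) B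
  | record {Γ es R} : DerivRow Γ es R → Deriv Γ (.record es) (.record R)
  | proj {Γ R M ℓ A} : Deriv Γ M (.record R) → List.lookup ℓ R = some A →
      Deriv Γ (.proj M ℓ) A
  | upcast {Γ M A B} : Deriv Γ M A → Sub A B → Deriv Γ (.upcast M B) B
inductive DerivRow : List Ty → List (Label × Tm) → List (Label × Ty) → Type where
  | nil {Γ} : DerivRow Γ [] []
  | cons {Γ ℓ M A es R} : Deriv Γ M A → DerivRow Γ es R →
      DerivRow Γ ((ℓ, M) :: es) ((ℓ, A) :: R)
end

/-! ### The target calculus λ_{[]}^{ρθ}: records with both row and presence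
polymorphism. -/

/-- Presence annotations. -/
inductive Pre : Type where
  | abs : Pre
  | pres : Pre
  | pvar : ℕ → Pre

/-- Target types: record rows carry presence annotations and an optional row
variable tail; `rall L A` is ∀ρ^{Row_L}.A and `pall A` is ∀θ.A. -/
inductive RTy : Type where
  | tvar : ℕ → RTy
  | arrow : RTy → RTy → RTy
  | record : List (Label × Pre × RTy) → Option ℕ → RTy
  | rall : List Label → RTy → RTy
  | pall : RTy → RTy

abbrev RRow := List (Label × Pre × RTy) × Option ℕ

def shiftPre (c : ℕ) : Pre → Pre
  | .pvar n => if n < c then .pvar n else .pvar (n + 1)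
  | p => p

def substPreP (k : ℕ) (P : Pre) : Pre → Pre
  | .pvar n => if n = k then P else if n < k then .pvar n else .pvar (n - 1)
  | p => p

mutual
/-- Shift row variables ≥ c up by one. -/
def shiftRowTy (c : ℕ) : RTy → RTy
  | .tvar n => .tvar n
  | .arrow A B => .arrow (shiftRowTy c A) (shiftRowTy c B)
  | .record es r =>
      .record (shiftRowEs c es) (r.map (fun n => if n < c then n else n + 1))
  | .rall L A => .rall L (shiftRowTy (c + 1) A)
  | .pall A => .pall (shiftRowTy c A)
def shiftRowEs (c : ℕ) : List (Label × Pre × RTy) → List (Label × Pre × RTy)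
  | [] => []
  | (ℓ, P, A) :: es => (ℓ, P, shiftRowTy c A) :: shiftRowEs c es
end

mutual
/-- Shift presence variables ≥ c up by one. -/
def shiftPreTy (c : ℕ) : RTy → RTy
  | .tvar n => .tvar n
  | .arrow A B => .arrow (shiftPreTy c A) (shiftPreTy c B)
  | .record es r => .record (shiftPreEs c es) r
  | .rall L A => .rall L (shiftPreTy c A)
  | .pall A => .pall (shiftPreTy (c + 1) A)
def shiftPreEs (c : ℕ) : List (Label × Pre × RTy) → List (Label × Pre × RTy)
  | [] => []
  | (ℓ, P, A) :: es => (ℓ, shiftPre c P, shiftPreTy c A) :: shiftPreEs c es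
end

def shiftRowRRow (c : ℕ) (R : RRow) : RRow :=
  (shiftRowEs c R.1, R.2.map (fun n => if n < c then n else n + 1))

def shiftPreRRow (c : ℕ) (R : RRow) : RRow := (shiftPreEs c R.1, R.2)

mutual
/-- Substitute row R for row variable k. -/
def substRowTy (k : ℕ) (R : RRow) : RTy → RTy
  | .tvar n => .tvar n
  | .arrow A B => .arrow (substRowTy k R A) (substRowTy k R B)
  | .record es r =>
      let es' := substRowEs k R es
      match r with
      | none => .record es' none
      | some n =>
        if n = k then .record (es' ++ R.1) R.2
        else if n < k then .record es' (some n)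
        else .record es' (some (n - 1))
  | .rall L A => .rall L (substRowTy (k + 1) (shiftRowRRow 0 R) A)
  | .pall A => .pall (substRowTy k (shiftPreRRow 0 R) A)
def substRowEs (k : ℕ) (R : RRow) : List (Label × Pre × RTy) → List (Label × Pre × RTy)
  | [] => []
  | (ℓ, P, A) :: es => (ℓ, P, substRowTy k R A) :: substRowEs k R es
end

mutual
/-- Substitute presence type P for presence variable k. -/
def substPreTy (k : ℕ) (P : Pre) : RTy → RTy
  | .tvar n => .tvar n
  | .arrow A B => .arrow (substPreTy k P A) (substPreTy k P B)
  | .record es r => .record (substPreEs k P es) r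
  | .rall L A => .rall L (substPreTy k P A)
  | .pall A => .pall (substPreTy (k + 1) (shiftPre 0 P) A)
def substPreEs (k : ℕ) (P : Pre) : List (Label × Pre × RTy) → List (Label × Pre × RTy)
  | [] => []
  | (ℓ, Q, A) :: es => (ℓ, substPreP k P Q, substPreTy k P A) :: substPreEs k P es
end

/-- Type equivalence: rows are compared ignoring label order and absent
labels. -/
inductive TyEquiv : RTy → RTy → Prop where
  | refl (A) : TyEquiv A A
  | symm {A B} : TyEquiv A B → TyEquiv B A
  | trans {A B C} : TyEquiv A B → TyEquiv B C → TyEquiv A C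
  | arrow {A A' B B'} : TyEquiv A A' → TyEquiv B B' →
      TyEquiv (.arrow A B) (.arrow A' B')
  | rall {L A A'} : TyEquiv A A' → TyEquiv (.rall L A) (.rall L A')
  | pall {A A'} : TyEquiv A A' → TyEquiv (.pall A) (.pall A')
  | recordCongr {es es' r} :
      es.map (fun q => (q.1, q.2.1)) = es'.map (fun q => (q.1, q.2.1)) →
      (∀ (i : ℕ) p q, es[i]? = some p → es'[i]? = some q →
        TyEquiv p.2.2 q.2.2) →
      TyEquiv (.record es r) (.record es' r)
  | recordPerm {es es' r} : List.Perm es es' →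
      TyEquiv (.record es r) (.record es' r)
  | recordAbsent {es₁ es₂ ℓ A r} :
      TyEquiv (.record (es₁ ++ (ℓ, Pre.abs, A) :: es₂) r) (.record (es₁ ++ es₂) r)

/-- Target terms (record constructions carry a type annotation). -/
inductive RTm : Type where
  | var : ℕ → RTm
  | lam : RTy → RTm → RTm
  | app : RTm → RTm → RTm
  | record : List (Label × RTm) → RTy → RTm
  | proj : RTm → Label → RTm
  | rlam : List Label → RTm → RTm
  | rapp : RTm → RRow → RTm
  | plam : RTm → RTm
  | papp : RTm → Pre → RTm

/-- Typing of λ_{[]}^{ρθ}. -/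
inductive RHasTy : List RTy → RTm → RTy → Prop where
  | var {Γ n A} : Γ[n]? = some A → RHasTy Γ (.var n) A
  | lam {Γ A B M} : RHasTy (A :: Γ) M B → RHasTy Γ (.lam A M) (.arrow A B)
  | app {Γ A B M N} : RHasTy Γ M (.arrow A B) → RHasTy Γ N A →
      RHasTy Γ (.app M N) B
  | record {Γ} {es : List (Label × RTm)} {res : List (Label × Pre × RTy)} :
      es.map Prod.fst = res.map Prod.fst →
      (∀ (i : ℕ) p q, es[i]? = some p → res[i]? = some q →
        RHasTy Γ (Prod.snd p) (Prod.snd (Prod.snd q))) →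
      RHasTy Γ (.record es (.record res none)) (.record res none)
  | proj {Γ res r M ℓ A} : RHasTy Γ M (.record res r) →
      List.lookup ℓ res = some (Pre.pres, A) →
      RHasTy Γ (.proj M ℓ) A
  | rlam {Γ L M A} : RHasTy (Γ.map (shiftRowTy 0)) M A →
      RHasTy Γ (.rlam L M) (.rall L A)
  | rapp {Γ L M A R} : RHasTy Γ M (.rall L A) →
      RHasTy Γ (.rapp M R) (substRowTy 0 R A)
  | plam {Γ M A} : RHasTy (Γ.map (shiftPreTy 0)) M A →
      RHasTy Γ (.plam M) (.pall A)
  | papp {Γ M A P} : RHasTy Γ M (.pall A) → RHasTy Γ (.papp M P) (substPreTy 0 P A)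
  | conv {Γ M A A'} : RHasTy Γ M A → TyEquiv A A' → RHasTy Γ M A'

/-! ### Untyped terms and erasure. -/

inductive UTm : Type where
  | var : ℕ → UTm
  | lam : UTm → UTm
  | app : UTm → UTm → UTm
  | record : List (Label × UTm) → UTm
  | proj : UTm → Label → UTm

mutual
def eraseS : Tm → UTm
  | .var n => .var n
  | .lam _ M => .lam (eraseS M)
  | .app M N => .app (eraseS M) (eraseS N)
  | .record es => .record (eraseSEs es)
  | .proj M ℓ => .proj (eraseS M) ℓ
  | .upcast M _ => eraseS M
def eraseSEs : List (Label × Tm) → List (Label × UTm)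
  | [] => []
  | (ℓ, M) :: es => (ℓ, eraseS M) :: eraseSEs es
end

mutual
def eraseT : RTm → UTm
  | .var n => .var n
  | .lam _ M => .lam (eraseT M)
  | .app M N => .app (eraseT M) (eraseT N)
  | .record es _ => .record (eraseTEs es)
  | .proj M ℓ => .proj (eraseT M) ℓ
  | .rlam _ M => eraseT M
  | .rapp M _ => eraseT M
  | .plam M => eraseT M
  | .papp M _ => eraseT M
def eraseTEs : List (Label × RTm) → List (Label × UTm)
  | [] => []
  | (ℓ, M) :: es => (ℓ, eraseT M) :: eraseTEs es
end

/-! ### Development: a presence-tracking ground model -/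

/-- Presence-variable set (for presence values: a constant plus a set of
presence variables). -/
abbrev PP := Bool × (ℕ → Bool)

/-- Full presence set: constant, presence variables, row variables. -/
abbrev PS := Bool × (ℕ → Bool) × (ℕ → Bool)

def PS.bot : PS := (false, fun _ => false, fun _ => false)

def injPS (p : PP) : PS := (p.1, p.2, fun _ => false)

def joinPS (a b : PS) : PS :=
  (a.1 || b.1, fun n => a.2.1 n || b.2.1 n, fun n => a.2.2 n || b.2.2 n)

/-- Ground (model) types. -/
inductive NTy : Type where
  | tv : ℕ → NTy
  | arr : NTy → NTy → NTy
  | recd : (Label → PS) → NTy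
  | allR : NTy → NTy
  | allP : NTy → NTy

def delF (k : ℕ) (f : ℕ → Bool) : ℕ → Bool := fun n => if n < k then f n else f (n + 1)

def psubstPP (k : ℕ) (c : Bool) (p : PP) : PP :=
  (p.1 || (p.2 k && c), delF k p.2)

def psubstPS (k : ℕ) (c : Bool) (p : PS) : PS :=
  (p.1 || (p.2.1 k && c), delF k p.2.1, p.2.2)

def rsubstPS (k : ℕ) (ρ : Label → Bool) (ℓ : Label) (p : PS) : PS :=
  (p.1 || (p.2.2 k && ρ ℓ), p.2.1, delF k p.2.2)

/-- Substitute (closed) presence value `c` for presence variable `k`. -/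
def psubst (k : ℕ) (c : Bool) : NTy → NTy
  | .tv n => .tv n
  | .arr s b => .arr (psubst k c s) (psubst k c b)
  | .recd f => .recd (fun ℓ => psubstPS k c (f ℓ))
  | .allR N => .allR (psubst k c N)
  | .allP N => .allP (psubst (k + 1) c N)

/-- Substitute (closed) row value `ρ` for row variable `k`. -/
def rsubst (k : ℕ) (ρ : Label → Bool) : NTy → NTy
  | .tv n => .tv n
  | .arr s b => .arr (rsubst k ρ s) (rsubst k ρ b)
  | .recd f => .recd (fun ℓ => rsubstPS k ρ ℓ (f ℓ))
  | .allR N => .allR (rsubst (k + 1) ρ N)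
  | .allP N => .allP (rsubst k ρ N)

lemma PS.ext {a b : PS} (h1 : a.1 = b.1) (h2 : ∀ n, a.2.1 n = b.2.1 n)
    (h3 : ∀ n, a.2.2 n = b.2.2 n) : a = b := by
  obtain ⟨x, y, z⟩ := a; obtain ⟨x', y', z'⟩ := b
  simp only [Prod.mk.injEq]
  exact ⟨h1, funext h2, funext h3⟩

lemma PP.ext {a b : PP} (h1 : a.1 = b.1) (h2 : ∀ n, a.2 n = b.2 n) : a = b := by
  obtain ⟨x, y⟩ := a; obtain ⟨x', y'⟩ := b
  simp only [Prod.mk.injEq]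
  exact ⟨h1, funext h2⟩

/-! de Bruijn shifts on presence sets (used when a valuation goes under a
binder). -/
def pshPP (p : PP) : PP := (p.1, fun n => match n with | 0 => false | m + 1 => p.2 m)
def pshPS (p : PS) : PS := (p.1, fun n => match n with | 0 => false | m + 1 => p.2.1 m, p.2.2)
def rshPS (p : PS) : PS := (p.1, p.2.1, fun n => match n with | 0 => false | m + 1 => p.2.2 m)

/-! ### Commutation lemmas for substitutions (closed values) -/

lemma delF_delF (j k : ℕ) (h : j ≤ k) (f : ℕ → Bool) :
    delF j (delF (k + 1) f) = delF k (delF j f) := by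
  funext n
  simp only [delF]
  split_ifs <;> first | rfl | omega | (congr 1; omega)

lemma psubst_psubst (c c' : Bool) : ∀ (M : NTy) (j k : ℕ), j ≤ k →
    psubst j c' (psubst (k + 1) c M) = psubst k c (psubst j c' M) := by
  intro M
  induction M with
  | tv n => intro j k h; rfl
  | arr s b ihs ihb => intro j k h; simp [psubst, ihs _ _ h, ihb _ _ h]
  | recd f =>
      intro j k h
      simp only [psubst, NTy.recd.injEq]
      funext ℓ
      apply PS.ext
      · simp only [psubstPS, delF]
        have h2 : j < k + 1 := by omega
        have h3 : ¬ k < j := by omega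
        simp only [if_pos h2, if_neg h3]
        cases (f ℓ).1 <;> cases (f ℓ).2.1 j <;> cases (f ℓ).2.1 (k+1) <;>
          cases c <;> cases c' <;> rfl
      · intro n
        simp only [psubstPS]
        rw [delF_delF j k h]
      · intro n; rfl
  | allR N ih => intro j k h; simp [psubst, ih _ _ h]
  | allP N ih =>
      intro j k h
      simp only [psubst, NTy.allP.injEq]
      exact ih (j+1) (k+1) (by omega)

lemma psubst_rsubst (c : Bool) (ρ : Label → Bool) : ∀ (M : NTy) (j k : ℕ),
    psubst j c (rsubst k ρ M) = rsubst k ρ (psubst j c M) := by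
  intro M
  induction M with
  | tv n => intro j k; rfl
  | arr s b ihs ihb => intro j k; simp [psubst, rsubst, ihs, ihb]
  | recd f =>
      intro j k
      simp only [psubst, rsubst, NTy.recd.injEq]
      funext ℓ
      apply PS.ext
      · simp only [psubstPS, rsubstPS]
        cases (f ℓ).1 <;> cases ((f ℓ).2.1 j && c) <;> cases ((f ℓ).2.2 k && ρ ℓ) <;> simp
      · intro n; rfl
      · intro n; rfl
  | allR N ih => intro j k; simp [psubst, rsubst, ih]
  | allP N ih => intro j k; simp [psubst, rsubst, ih]

lemma rsubst_rsubst (ρ ρ' : Label → Bool) : ∀ (M : NTy) (j k : ℕ), j ≤ k →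
    rsubst j ρ' (rsubst (k + 1) ρ M) = rsubst k ρ (rsubst j ρ' M) := by
  intro M
  induction M with
  | tv n => intro j k h; rfl
  | arr s b ihs ihb => intro j k h; simp [rsubst, ihs _ _ h, ihb _ _ h]
  | recd f =>
      intro j k h
      simp only [rsubst, NTy.recd.injEq]
      funext ℓ
      apply PS.ext
      · simp only [rsubstPS, delF]
        have h2 : j < k + 1 := by omega
        have h3 : ¬ k < j := by omega
        simp only [if_pos h2, if_neg h3]
        cases (f ℓ).1 <;> cases (f ℓ).2.2 j <;> cases (f ℓ).2.2 (k+1) <;>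
          cases ρ ℓ <;> cases ρ' ℓ <;> rfl
      · intro n; rfl
      · intro n
        simp only [rsubstPS]
        rw [delF_delF j k h]
  | allR N ih =>
      intro j k h
      simp only [rsubst, NTy.allR.injEq]
      exact ih (j+1) (k+1) (by omega)
  | allP N ih => intro j k h; simp [rsubst, ih _ _ h]
/-! ### Interpretation of target types into the ground model -/

abbrev Val := (ℕ → PP) × (ℕ → Label → PS)

def pv0 : PP := (false, fun n => n == 0)
def rv0 : Label → PS := fun _ => (false, fun _ => false, fun n => n == 0)

def underP (v : Val) : Val :=
  (fun n => match n with | 0 => pv0 | m + 1 => pshPP (v.1 m),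
   fun m ℓ => pshPS (v.2 m ℓ))

def underR (v : Val) : Val :=
  (v.1, fun m ℓ => match m with | 0 => rv0 ℓ | m + 1 => rshPS (v.2 m ℓ))

def denP (v : Val) : Pre → PP
  | .abs => (false, fun _ => false)
  | .pres => (true, fun _ => false)
  | .pvar n => v.1 n

def entryY (v : Val) (ℓ : Label) (q : Label × Pre × RTy) : Bool :=
  (q.1 == ℓ) && (denP v q.2.1).1
def entryV (v : Val) (ℓ : Label) (n : ℕ) (q : Label × Pre × RTy) : Bool :=
  (q.1 == ℓ) && (denP v q.2.1).2 n

def entsPS (v : Val) (es : List (Label × Pre × RTy)) (ℓ : Label) : PS :=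
  (es.any (entryY v ℓ), fun n => es.any (entryV v ℓ n), fun _ => false)

def tailPS (v : Val) : Option ℕ → Label → PS
  | none, _ => PS.bot
  | some m, ℓ => v.2 m ℓ

def den (v : Val) : RTy → NTy
  | .tvar n => .tv n
  | .arrow A B => .arr (den v A) (den v B)
  | .record es r => .recd (fun ℓ => joinPS (entsPS v es ℓ) (tailPS v r ℓ))
  | .rall _ A => .allR (den (underR v) A)
  | .pall A => .allP (den (underP v) A)

def denRow (v : Val) (R : RRow) (ℓ : Label) : PS :=
  joinPS (entsPS v R.1 ℓ) (tailPS v R.2 ℓ)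

def vShiftP (c : ℕ) (v : Val) : Val :=
  (fun n => v.1 (if n < c then n else n + 1), v.2)
def vShiftR (c : ℕ) (v : Val) : Val :=
  (v.1, fun n ℓ => v.2 (if n < c then n else n + 1) ℓ)
def vInsP (k : ℕ) (x : PP) (v : Val) : Val :=
  (fun n => if n < k then v.1 n else if n = k then x else v.1 (n - 1), v.2)
def vInsR (k : ℕ) (x : Label → PS) (v : Val) : Val :=
  (v.1, fun n ℓ => if n < k then v.2 n ℓ else if n = k then x ℓ else v.2 (n - 1) ℓ)
def vMapP (k : ℕ) (c : Bool) (v : Val) : Val :=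
  (fun n => psubstPP k c (v.1 n), fun m ℓ => psubstPS k c (v.2 m ℓ))
def vMapR (k : ℕ) (ρ : Label → Bool) (v : Val) : Val :=
  (v.1, fun m ℓ => rsubstPS k ρ ℓ (v.2 m ℓ))

lemma Val.ext {v w : Val} (h1 : ∀ n, v.1 n = w.1 n)
    (h2 : ∀ m ℓ, v.2 m ℓ = w.2 m ℓ) : v = w := by
  obtain ⟨a, b⟩ := v; obtain ⟨a', b'⟩ := w
  simp only [Prod.mk.injEq]
  exact ⟨funext h1, funext fun m => funext (h2 m)⟩

/-! #### Basic PS algebra -/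

lemma joinPS_assoc (a b c : PS) : joinPS (joinPS a b) c = joinPS a (joinPS b c) := by
  apply PS.ext <;> intros <;> simp [joinPS, Bool.or_assoc]

lemma psubstPS_join (k : ℕ) (c : Bool) (a b : PS) :
    psubstPS k c (joinPS a b) = joinPS (psubstPS k c a) (psubstPS k c b) := by
  apply PS.ext
  · simp only [psubstPS, joinPS]
    cases a.1 <;> cases b.1 <;> cases a.2.1 k <;> cases b.2.1 k <;> cases c <;> rfl
  · intro n; simp only [psubstPS, joinPS, delF]; split_ifs <;> rfl
  · intro n; rfl

lemma rsubstPS_join (k : ℕ) (ρ : Label → Bool) (ℓ : Label) (a b : PS) :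
    rsubstPS k ρ ℓ (joinPS a b) = joinPS (rsubstPS k ρ ℓ a) (rsubstPS k ρ ℓ b) := by
  apply PS.ext
  · simp only [rsubstPS, joinPS]
    cases a.1 <;> cases b.1 <;> cases a.2.2 k <;> cases b.2.2 k <;> cases ρ ℓ <;> rfl
  · intro n; rfl
  · intro n; simp only [rsubstPS, joinPS, delF]; split_ifs <;> rfl

lemma pshPS_join (a b : PS) : pshPS (joinPS a b) = joinPS (pshPS a) (pshPS b) := by
  apply PS.ext
  · rfl
  · intro n; cases n <;> rfl
  · intro n; rfl

lemma rshPS_join (a b : PS) : rshPS (joinPS a b) = joinPS (rshPS a) (rshPS b) := by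
  apply PS.ext
  · rfl
  · intro n; rfl
  · intro n; cases n <;> rfl

lemma psubstPS_bot (k c) : psubstPS k c PS.bot = PS.bot := by
  apply PS.ext <;> intros <;> simp [psubstPS, PS.bot, delF]

lemma rsubstPS_bot (k ρ ℓ) : rsubstPS k ρ ℓ PS.bot = PS.bot := by
  apply PS.ext <;> intros <;> simp [rsubstPS, PS.bot, delF]

lemma pshPS_bot : pshPS PS.bot = PS.bot := by
  apply PS.ext
  · rfl
  · intro n; cases n <;> rfl
  · intro n; rfl

lemma rshPS_bot : rshPS PS.bot = PS.bot := by
  apply PS.ext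
  · rfl
  · intro n; rfl
  · intro n; cases n <;> rfl

lemma psubstPS_rsh (k c p) : psubstPS k c (rshPS p) = rshPS (psubstPS k c p) := by
  apply PS.ext
  · rfl
  · intro n; rfl
  · intro n; rfl

lemma rsubstPS_psh (k ρ ℓ p) : rsubstPS k ρ ℓ (pshPS p) = pshPS (rsubstPS k ρ ℓ p) := by
  apply PS.ext
  · rfl
  · intro n; rfl
  · intro n; rfl

lemma psubstPS_psh (k c p) : psubstPS (k + 1) c (pshPS p) = pshPS (psubstPS k c p) := by
  apply PS.ext
  · rfl
  · intro n
    cases n with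
    | zero => simp [psubstPS, pshPS, delF]
    | succ m =>
        simp only [psubstPS, pshPS, delF]
        by_cases h : m < k
        · simp [h, Nat.succ_lt_succ h]
        · have : ¬ (m + 1 < k + 1) := by omega
          simp [h, this]
  · intro n; rfl

lemma psubstPP_psh (k c p) : psubstPP (k + 1) c (pshPP p) = pshPP (psubstPP k c p) := by
  apply PP.ext
  · rfl
  · intro n
    cases n with
    | zero => simp [psubstPP, pshPP, delF]
    | succ m =>
        simp only [psubstPP, pshPP, delF]
        by_cases h : m < k
        · simp [h, Nat.succ_lt_succ h]
        · have : ¬ (m + 1 < k + 1) := by omega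
          simp [h, this]

lemma rsubstPS_rsh (k ρ ℓ p) : rsubstPS (k + 1) ρ ℓ (rshPS p) = rshPS (rsubstPS k ρ ℓ p) := by
  apply PS.ext
  · rfl
  · intro n; rfl
  · intro n
    cases n with
    | zero => simp [rsubstPS, rshPS, delF]
    | succ m =>
        simp only [rsubstPS, rshPS, delF]
        by_cases h : m < k
        · simp [h, Nat.succ_lt_succ h]
        · have : ¬ (m + 1 < k + 1) := by omega
          simp [h, this]

lemma psubstPP_pv0 (k c) : psubstPP (k + 1) c pv0 = pv0 := by
  apply PP.ext
  · simp [psubstPP, pv0]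
  · intro n
    simp only [psubstPP, pv0, delF]
    split_ifs with h
    · rfl
    · have h1 : ¬ (n = 0) := by omega
      have h2 : ¬ (n + 1 = 0) := by omega
      simp [h1, h2]

lemma psubstPS_rv0 (k c ℓ) : psubstPS k c (rv0 ℓ) = rv0 ℓ := by
  apply PS.ext
  · simp [psubstPS, rv0]
  · intro n; simp [psubstPS, rv0, delF]
  · intro n; rfl

lemma rsubstPS_rv0 (k ρ ℓ ℓ') : rsubstPS (k + 1) ρ ℓ (rv0 ℓ') = rv0 ℓ' := by
  apply PS.ext
  · simp [rsubstPS, rv0]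
  · intro n; rfl
  · intro n
    simp only [rsubstPS, rv0, delF]
    split_ifs with h
    · rfl
    · have h1 : ¬ (n = 0) := by omega
      have h2 : ¬ (n + 1 = 0) := by omega
      simp [h1, h2]
/-! #### Entry-set lemmas -/

def entryPS (v : Val) (ℓ : Label) (q : Label × Pre × RTy) : PS :=
  ((q.1 == ℓ) && (denP v q.2.1).1, fun n => (q.1 == ℓ) && (denP v q.2.1).2 n,
   fun _ => false)

lemma ents_nil (v ℓ) : entsPS v [] ℓ = PS.bot := rfl

lemma ents_cons (v ℓ q es) :
    entsPS v (q :: es) ℓ = joinPS (entryPS v ℓ q) (entsPS v es ℓ) := by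
  apply PS.ext
  · simp [entsPS, entryPS, joinPS, List.any_cons, entryY]
  · intro n; simp [entsPS, entryPS, joinPS, List.any_cons, entryV]
  · intro n; rfl

lemma joinPS_bot_left (a : PS) : joinPS PS.bot a = a := by
  apply PS.ext <;> intros <;> simp [joinPS, PS.bot]

lemma joinPS_bot_right (a : PS) : joinPS a PS.bot = a := by
  apply PS.ext <;> intros <;> simp [joinPS, PS.bot]

lemma joinPS_left_comm (a b c : PS) :
    joinPS a (joinPS b c) = joinPS b (joinPS a c) := by
  apply PS.ext <;> intros <;> simp [joinPS, Bool.or_left_comm]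

lemma ents_append (v ℓ l₁ l₂) :
    entsPS v (l₁ ++ l₂) ℓ = joinPS (entsPS v l₁ ℓ) (entsPS v l₂ ℓ) := by
  induction l₁ with
  | nil => simp [ents_nil, joinPS_bot_left]
  | cons q l₁ ih => simp [ents_cons, ih, joinPS_assoc]

lemma ents_perm (v ℓ) {es es'} (h : List.Perm es es') :
    entsPS v es ℓ = entsPS v es' ℓ := by
  induction h with
  | nil => rfl
  | cons q _ ih => rw [ents_cons, ents_cons, ih]
  | swap x y l => rw [ents_cons, ents_cons, ents_cons, ents_cons, joinPS_left_comm]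
  | trans _ _ ih1 ih2 => rw [ih1, ih2]

lemma ents_proj_congr (v ℓ) : ∀ {es es' : List (Label × Pre × RTy)},
    es.map (fun q => (q.1, q.2.1)) = es'.map (fun q => (q.1, q.2.1)) →
    entsPS v es ℓ = entsPS v es' ℓ := by
  intro es
  induction es with
  | nil => intro es' h; cases es' <;> simp_all
  | cons q es ih =>
      intro es' h
      cases es' with
      | nil => simp_all
      | cons q' es' =>
          simp only [List.map_cons, List.cons.injEq, Prod.mk.injEq] at h
          obtain ⟨⟨h1, h2⟩, h3⟩ := h
          rw [ents_cons, ents_cons, ih h3]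
          congr 1
          apply PS.ext
          · simp [entryPS, h1, h2]
          · intro n; simp [entryPS, h1, h2]
          · intro n; rfl

/-! entries under the various valuation transformations -/

lemma denP_vMapP (k c v P) : denP (vMapP k c v) P = psubstPP k c (denP v P) := by
  cases P with
  | abs =>
      apply PP.ext
      · simp [denP, psubstPP]
      · intro n; simp [denP, psubstPP, delF]
  | pres =>
      apply PP.ext
      · simp [denP, psubstPP]
      · intro n; simp [denP, psubstPP, delF]
  | pvar n => rfl

lemma denP_vMapR (k ρ v P) : denP (vMapR k ρ v) P = denP v P := by cases P <;> rfl
lemma denP_vShiftR (c v P) : denP (vShiftR c v) P = denP v P := by cases P <;> rfl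
lemma denP_vInsR (k x v P) : denP (vInsR k x v) P = denP v P := by cases P <;> rfl
lemma denP_underR (v P) : denP (underR v) P = denP v P := by cases P <;> rfl

lemma denP_shiftP (c v P) : denP v (shiftPre c P) = denP (vShiftP c v) P := by
  cases P with
  | abs => rfl
  | pres => rfl
  | pvar n =>
      simp only [shiftPre]
      split_ifs with h <;> simp [denP, vShiftP, h]

lemma denP_substPreP (k v P Q) :
    denP v (substPreP k P Q) = denP (vInsP k (denP v P) v) Q := by
  cases Q with
  | abs => rfl
  | pres => rfl
  | pvar n =>
      simp only [substPreP]
      by_cases h1 : n = k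
      · subst h1; simp [denP, vInsP]
      · by_cases h2 : n < k <;> simp [denP, vInsP, h1, h2]

lemma denP_shift0_underP (v P) :
    denP (underP v) (shiftPre 0 P) = pshPP (denP v P) := by
  cases P with
  | abs =>
      apply PP.ext
      · rfl
      · intro n; cases n <;> rfl
  | pres =>
      apply PP.ext
      · rfl
      · intro n; cases n <;> rfl
  | pvar n => simp [shiftPre, denP, underP]

lemma entryPS_congrP {v w : Val} (ℓ q) (h : denP v q.2.1 = denP w q.2.1) :
    entryPS v ℓ q = entryPS w ℓ q := by
  apply PS.ext
  · simp [entryPS, h]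
  · intro n; simp [entryPS, h]
  · intro n; rfl

lemma ents_denP_congr {v w : Val} (ℓ) (h : ∀ P, denP v P = denP w P) :
    ∀ es, entsPS v es ℓ = entsPS w es ℓ := by
  intro es
  induction es with
  | nil => rfl
  | cons q es ih => rw [ents_cons, ents_cons, ih, entryPS_congrP _ _ (h _)]

lemma ents_vMapP (k c v ℓ es) :
    entsPS (vMapP k c v) es ℓ = psubstPS k c (entsPS v es ℓ) := by
  induction es with
  | nil => rw [ents_nil, ents_nil, psubstPS_bot]
  | cons q es ih =>
      rw [ents_cons, ents_cons, ih, psubstPS_join]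
      congr 1
      apply PS.ext
      · simp only [entryPS, psubstPS, denP_vMapP, psubstPP]
        cases (q.1 == ℓ) <;> cases (denP v q.2.1).1 <;> cases (denP v q.2.1).2 k <;>
          cases c <;> rfl
      · intro n
        simp only [entryPS, psubstPS, denP_vMapP, psubstPP, delF]
        split_ifs <;> rfl
      · intro n; rfl

lemma rsubst_ents (k ρ ℓ v es) :
    rsubstPS k ρ ℓ (entsPS v es ℓ) = entsPS v es ℓ := by
  apply PS.ext
  · simp [rsubstPS, entsPS]
  · intro n; rfl
  · intro n; simp [rsubstPS, entsPS, delF]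

lemma ents_vMapR (k ρ v ℓ es) :
    entsPS (vMapR k ρ v) es ℓ = entsPS v es ℓ :=
  ents_denP_congr ℓ (fun P => denP_vMapR k ρ v P) es

lemma ents_vInsR (k x v ℓ es) :
    entsPS (vInsR k x v) es ℓ = entsPS v es ℓ :=
  ents_denP_congr ℓ (fun P => denP_vInsR k x v P) es

lemma ents_underR (v ℓ es) : entsPS (underR v) es ℓ = entsPS v es ℓ :=
  ents_denP_congr ℓ (fun P => denP_underR v P) es

lemma rsh_ents (v ℓ es) : rshPS (entsPS v es ℓ) = entsPS v es ℓ := by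
  apply PS.ext
  · rfl
  · intro n; rfl
  · intro n; cases n <;> rfl

lemma ents_shiftPreEs (c v ℓ) : ∀ es,
    entsPS v (shiftPreEs c es) ℓ = entsPS (vShiftP c v) es ℓ := by
  intro es
  induction es with
  | nil => rfl
  | cons q es ih =>
      obtain ⟨ℓ', P, A⟩ := q
      show entsPS v ((ℓ', shiftPre c P, shiftPreTy c A) :: shiftPreEs c es) ℓ = _
      rw [ents_cons, ents_cons, ih]
      congr 1
      apply PS.ext
      · simp [entryPS, denP_shiftP]
      · intro n; simp [entryPS, denP_shiftP]
      · intro n; rfl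

lemma ents_shiftRowEs (c v ℓ) : ∀ es,
    entsPS v (shiftRowEs c es) ℓ = entsPS v es ℓ := by
  intro es
  induction es with
  | nil => rfl
  | cons q es ih =>
      obtain ⟨ℓ', P, A⟩ := q
      show entsPS v ((ℓ', P, shiftRowTy c A) :: shiftRowEs c es) ℓ = _
      rw [ents_cons, ents_cons, ih]; rfl

lemma ents_substRowEs (k R v ℓ) : ∀ es,
    entsPS v (substRowEs k R es) ℓ = entsPS v es ℓ := by
  intro es
  induction es with
  | nil => rfl
  | cons q es ih =>
      obtain ⟨ℓ', P, A⟩ := q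
      show entsPS v ((ℓ', P, substRowTy k R A) :: substRowEs k R es) ℓ = _
      rw [ents_cons, ents_cons, ih]; rfl

lemma ents_substPreEs (k P v ℓ) : ∀ es,
    entsPS v (substPreEs k P es) ℓ = entsPS (vInsP k (denP v P) v) es ℓ := by
  intro es
  induction es with
  | nil => rfl
  | cons q es ih =>
      obtain ⟨ℓ', Q, A⟩ := q
      show entsPS v ((ℓ', substPreP k P Q, substPreTy k P A) :: substPreEs k P es) ℓ = _
      rw [ents_cons, ents_cons, ih]
      congr 1
      apply PS.ext
      · simp [entryPS, denP_substPreP]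
      · intro n; simp [entryPS, denP_substPreP]
      · intro n; rfl

lemma ents_shift0P_underP (v ℓ) : ∀ es,
    entsPS (underP v) (shiftPreEs 0 es) ℓ = pshPS (entsPS v es ℓ) := by
  intro es
  induction es with
  | nil => rw [ents_nil, show shiftPreEs 0 [] = [] from rfl, ents_nil, pshPS_bot]
  | cons q es ih =>
      obtain ⟨ℓ', P, A⟩ := q
      show entsPS (underP v) ((ℓ', shiftPre 0 P, shiftPreTy 0 A) :: shiftPreEs 0 es) ℓ = _
      rw [ents_cons, ents_cons, ih, pshPS_join]
      congr 1
      apply PS.ext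
      · simp [entryPS, denP_shift0_underP, pshPS, pshPP]
      · intro n
        cases n with
        | zero => simp [entryPS, denP_shift0_underP, pshPS, pshPP]
        | succ m => simp [entryPS, denP_shift0_underP, pshPS, pshPP]
      · intro n; rfl
/-! #### Valuation identities -/

lemma vMapP_underR (k c v) : vMapP k c (underR v) = underR (vMapP k c v) := by
  apply Val.ext
  · intro n; rfl
  · intro m ℓ
    cases m with
    | zero => exact psubstPS_rv0 k c ℓ
    | succ m => exact psubstPS_rsh k c (v.2 m ℓ)

lemma vMapP_underP (k c v) : vMapP (k + 1) c (underP v) = underP (vMapP k c v) := by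
  apply Val.ext
  · intro n
    cases n with
    | zero => exact psubstPP_pv0 k c
    | succ m => exact psubstPP_psh k c (v.1 m)
  · intro m ℓ; exact psubstPS_psh k c (v.2 m ℓ)

lemma vMapR_underP (k ρ v) : vMapR k ρ (underP v) = underP (vMapR k ρ v) := by
  apply Val.ext
  · intro n; cases n <;> rfl
  · intro m ℓ; exact rsubstPS_psh k ρ ℓ (v.2 m ℓ)

lemma vMapR_underR (k ρ v) : vMapR (k + 1) ρ (underR v) = underR (vMapR k ρ v) := by
  apply Val.ext
  · intro n; rfl
  · intro m ℓ
    cases m with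
    | zero => exact rsubstPS_rv0 k ρ ℓ ℓ
    | succ m => exact rsubstPS_rsh k ρ ℓ (v.2 m ℓ)

lemma vShiftP_underR (c v) : vShiftP c (underR v) = underR (vShiftP c v) := by
  apply Val.ext
  · intro n; rfl
  · intro m ℓ; cases m <;> rfl

lemma vShiftP_underP (c v) : vShiftP (c + 1) (underP v) = underP (vShiftP c v) := by
  apply Val.ext
  · intro n
    cases n with
    | zero =>
        show (underP v).1 (if 0 < c + 1 then 0 else 1) = pv0
        rw [if_pos (by omega : 0 < c + 1)]
        rfl
    | succ m =>
        show (underP v).1 (if m + 1 < c + 1 then m + 1 else m + 1 + 1)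
            = pshPP ((vShiftP c v).1 m)
        by_cases h : m < c
        · rw [if_pos (by omega : m + 1 < c + 1)]
          show pshPP (v.1 m) = pshPP (v.1 (if m < c then m else m + 1))
          rw [if_pos h]
        · rw [if_neg (by omega : ¬ (m + 1 < c + 1))]
          show pshPP (v.1 (m + 1)) = pshPP (v.1 (if m < c then m else m + 1))
          rw [if_neg h]
  · intro m ℓ; rfl

lemma vShiftR_underP (c v) : vShiftR c (underP v) = underP (vShiftR c v) := by
  apply Val.ext
  · intro n; cases n <;> rfl
  · intro m ℓ; rfl

lemma vShiftR_underR (c v) : vShiftR (c + 1) (underR v) = underR (vShiftR c v) := by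
  apply Val.ext
  · intro n; rfl
  · intro m ℓ
    cases m with
    | zero =>
        show (underR v).2 (if 0 < c + 1 then 0 else 1) ℓ = rv0 ℓ
        simp
        rfl
    | succ m =>
        show (underR v).2 (if m + 1 < c + 1 then m + 1 else m + 1 + 1) ℓ
            = rshPS ((vShiftR c v).2 m ℓ)
        by_cases h : m < c
        · rw [if_pos (by omega : m + 1 < c + 1)]
          show rshPS (v.2 m ℓ) = rshPS (v.2 (if m < c then m else m + 1) ℓ)
          rw [if_pos h]
        · rw [if_neg (by omega : ¬ (m + 1 < c + 1))]
          show rshPS (v.2 (m + 1) ℓ) = rshPS (v.2 (if m < c then m else m + 1) ℓ)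
          rw [if_neg h]

lemma vInsP_underR (k x v) : vInsP k x (underR v) = underR (vInsP k x v) := by
  apply Val.ext
  · intro n; rfl
  · intro m ℓ; cases m <;> rfl

lemma vInsP_underP (k x v) :
    vInsP (k + 1) (pshPP x) (underP v) = underP (vInsP k x v) := by
  apply Val.ext
  · intro n
    cases n with
    | zero =>
        show (if 0 < k + 1 then (underP v).1 0 else if 0 = k + 1 then pshPP x else (underP v).1 (0 - 1)) = pv0
        simp
        rfl
    | succ m =>
        show (if m + 1 < k + 1 then (underP v).1 (m + 1)
              else if m + 1 = k + 1 then pshPP x else (underP v).1 (m + 1 - 1))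
            = pshPP (if m < k then v.1 m else if m = k then x else v.1 (m - 1))
        rcases lt_trichotomy m k with h | h | h
        · simp [h, Nat.succ_lt_succ h]
          rfl
        · subst h
          simp
        · have h1 : ¬ (m + 1 < k + 1) := by omega
          have h2 : ¬ (m + 1 = k + 1) := by omega
          have h3 : ¬ (m < k) := by omega
          have h4 : ¬ (m = k) := by omega
          simp only [if_neg h1, if_neg h2, if_neg h3, if_neg h4]
          have hm : m + 1 - 1 = m := rfl
          rw [hm]
          obtain ⟨s, rfl⟩ : ∃ s, m = s + 1 := ⟨m - 1, by omega⟩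
          rfl
  · intro m ℓ; rfl

lemma vInsR_underP (k x v) :
    vInsR k (fun ℓ => pshPS (x ℓ)) (underP v) = underP (vInsR k x v) := by
  apply Val.ext
  · intro n; cases n <;> rfl
  · intro m ℓ
    show (if m < k then (underP v).2 m ℓ else if m = k then pshPS (x ℓ)
          else (underP v).2 (m - 1) ℓ)
        = pshPS (if m < k then v.2 m ℓ else if m = k then x ℓ else v.2 (m - 1) ℓ)
    split_ifs <;> rfl

lemma vInsR_underR (k x v) :
    vInsR (k + 1) (fun ℓ => rshPS (x ℓ)) (underR v) = underR (vInsR k x v) := by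
  apply Val.ext
  · intro n; rfl
  · intro m ℓ
    cases m with
    | zero =>
        show (if 0 < k + 1 then (underR v).2 0 ℓ else if 0 = k + 1 then rshPS (x ℓ) else (underR v).2 (0 - 1) ℓ) = rv0 ℓ
        simp
        rfl
    | succ m =>
        show (if m + 1 < k + 1 then (underR v).2 (m + 1) ℓ
              else if m + 1 = k + 1 then rshPS (x ℓ) else (underR v).2 (m + 1 - 1) ℓ)
            = rshPS (if m < k then v.2 m ℓ else if m = k then x ℓ else v.2 (m - 1) ℓ)
        rcases lt_trichotomy m k with h | h | h
        · simp [h, Nat.succ_lt_succ h]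
          rfl
        · subst h
          simp
        · have h1 : ¬ (m + 1 < k + 1) := by omega
          have h2 : ¬ (m + 1 = k + 1) := by omega
          have h3 : ¬ (m < k) := by omega
          have h4 : ¬ (m = k) := by omega
          simp only [if_neg h1, if_neg h2, if_neg h3, if_neg h4]
          have hm : m + 1 - 1 = m := rfl
          rw [hm]
          obtain ⟨s, rfl⟩ : ∃ s, m = s + 1 := ⟨m - 1, by omega⟩
          rfl

/-! #### Main interpretation lemmas -/

theorem den_vMapP : ∀ (A : RTy) (v : Val) (k : ℕ) (c : Bool),
    psubst k c (den v A) = den (vMapP k c v) A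
  | .tvar n, v, k, c => rfl
  | .arrow A B, v, k, c => by
      simp only [den, psubst]
      rw [den_vMapP A v k c, den_vMapP B v k c]
  | .record es r, v, k, c => by
      simp only [den, psubst, NTy.recd.injEq]
      funext ℓ
      rw [psubstPS_join, ← ents_vMapP]
      congr 1
      cases r with
      | none => exact psubstPS_bot k c
      | some m => rfl
  | .rall L A, v, k, c => by
      simp only [den, psubst]
      rw [den_vMapP A (underR v) k c, vMapP_underR]
  | .pall A, v, k, c => by
      simp only [den, psubst]
      rw [den_vMapP A (underP v) (k + 1) c, vMapP_underP]

theorem den_vMapR : ∀ (A : RTy) (v : Val) (k : ℕ) (ρ : Label → Bool),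
    rsubst k ρ (den v A) = den (vMapR k ρ v) A
  | .tvar n, v, k, ρ => rfl
  | .arrow A B, v, k, ρ => by
      simp only [den, rsubst]
      rw [den_vMapR A v k ρ, den_vMapR B v k ρ]
  | .record es r, v, k, ρ => by
      simp only [den, rsubst, NTy.recd.injEq]
      funext ℓ
      rw [rsubstPS_join, rsubst_ents, ← ents_vMapR k ρ]
      congr 1
      cases r with
      | none => exact rsubstPS_bot k ρ ℓ
      | some m => rfl
  | .rall L A, v, k, ρ => by
      simp only [den, rsubst]
      rw [den_vMapR A (underR v) (k + 1) ρ, vMapR_underR]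
  | .pall A, v, k, ρ => by
      simp only [den, rsubst]
      rw [den_vMapR A (underP v) k ρ, vMapR_underP]

theorem den_shiftP : ∀ (A : RTy) (v : Val) (c : ℕ),
    den v (shiftPreTy c A) = den (vShiftP c v) A
  | .tvar n, v, c => rfl
  | .arrow A B, v, c => by
      simp only [shiftPreTy, den]
      rw [den_shiftP A v c, den_shiftP B v c]
  | .record es r, v, c => by
      simp only [shiftPreTy, den, NTy.recd.injEq]
      funext ℓ
      rw [ents_shiftPreEs]
      congr 1
  | .rall L A, v, c => by
      simp only [shiftPreTy, den]
      rw [den_shiftP A (underR v) c, vShiftP_underR]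
  | .pall A, v, c => by
      simp only [shiftPreTy, den]
      rw [den_shiftP A (underP v) (c + 1), vShiftP_underP]

theorem den_shiftR : ∀ (A : RTy) (v : Val) (c : ℕ),
    den v (shiftRowTy c A) = den (vShiftR c v) A
  | .tvar n, v, c => rfl
  | .arrow A B, v, c => by
      simp only [shiftRowTy, den]
      rw [den_shiftR A v c, den_shiftR B v c]
  | .record es r, v, c => by
      simp only [shiftRowTy, den, NTy.recd.injEq]
      funext ℓ
      rw [ents_shiftRowEs]
      congr 1
      cases r with
      | none => rfl
      | some m => rfl
  | .rall L A, v, c => by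
      simp only [shiftRowTy, den]
      rw [den_shiftR A (underR v) (c + 1), vShiftR_underR]
  | .pall A, v, c => by
      simp only [shiftRowTy, den]
      rw [den_shiftR A (underP v) c, vShiftR_underP]

theorem den_substPre : ∀ (A : RTy) (v : Val) (k : ℕ) (P : Pre),
    den v (substPreTy k P A) = den (vInsP k (denP v P) v) A
  | .tvar n, v, k, P => rfl
  | .arrow A B, v, k, P => by
      simp only [substPreTy, den]
      rw [den_substPre A v k P, den_substPre B v k P]
  | .record es r, v, k, P => by
      simp only [substPreTy, den, NTy.recd.injEq]
      funext ℓ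
      rw [ents_substPreEs]
      congr 1
  | .rall L A, v, k, P => by
      simp only [substPreTy, den]
      rw [den_substPre A (underR v) k P, denP_underR, vInsP_underR]
  | .pall A, v, k, P => by
      simp only [substPreTy, den]
      rw [den_substPre A (underP v) (k + 1) (shiftPre 0 P), denP_shift0_underP,
        vInsP_underP]

lemma denRow_shiftRowRRow (v R ℓ) :
    denRow (underR v) (shiftRowRRow 0 R) ℓ = rshPS (denRow v R ℓ) := by
  simp only [denRow, shiftRowRRow, rshPS_join]
  rw [ents_shiftRowEs, ents_underR, rsh_ents]
  congr 1
  cases hR : R.2 with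
  | none => simp [tailPS, rshPS_bot]
  | some m => simp [tailPS]; rfl

lemma denRow_shiftPreRRow (v R ℓ) :
    denRow (underP v) (shiftPreRRow 0 R) ℓ = pshPS (denRow v R ℓ) := by
  simp only [denRow, shiftPreRRow, pshPS_join]
  rw [ents_shift0P_underP]
  congr 1
  cases hR : R.2 with
  | none => simp [tailPS, pshPS_bot]
  | some m => rfl

theorem den_substRow : ∀ (A : RTy) (v : Val) (k : ℕ) (R : RRow),
    den v (substRowTy k R A) = den (vInsR k (denRow v R) v) A
  | .tvar n, v, k, R => rfl
  | .arrow A B, v, k, R => by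
      simp only [substRowTy, den]
      rw [den_substRow A v k R, den_substRow B v k R]
  | .record es r, v, k, R => by
      cases r with
      | none =>
          show den v (.record (substRowEs k R es) none) = _
          simp only [den, NTy.recd.injEq]
          funext ℓ
          rw [ents_substRowEs, ents_vInsR]
          rfl
      | some n =>
          rcases lt_trichotomy n k with h | h | h
          · have h' : ¬ (n = k) := by omega
            show den v (if n = k then RTy.record (substRowEs k R es ++ R.1) R.2
              else if n < k then RTy.record (substRowEs k R es) (some n)
              else RTy.record (substRowEs k R es) (some (n - 1))) = _
            rw [if_neg h', if_pos h]
            simp only [den, NTy.recd.injEq]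
            funext ℓ
            rw [ents_substRowEs, ents_vInsR]
            congr 1
            show v.2 n ℓ = if n < k then v.2 n ℓ else if n = k then denRow v R ℓ else v.2 (n - 1) ℓ
            rw [if_pos h]
          · subst h
            show den v (if n = n then RTy.record (substRowEs n R es ++ R.1) R.2
              else if n < n then RTy.record (substRowEs n R es) (some n)
              else RTy.record (substRowEs n R es) (some (n - 1))) = _
            rw [if_pos rfl]
            simp only [den, NTy.recd.injEq]
            funext ℓ
            rw [ents_append, ents_substRowEs, ents_vInsR, joinPS_assoc]
            congr 1
            show joinPS (entsPS v R.1 ℓ) (tailPS v R.2 ℓ)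
                = if n < n then v.2 n ℓ else if n = n then denRow v R ℓ else v.2 (n - 1) ℓ
            simp [denRow]
          · have h1 : ¬ (n = k) := by omega
            have h2 : ¬ (n < k) := by omega
            show den v (if n = k then RTy.record (substRowEs k R es ++ R.1) R.2
              else if n < k then RTy.record (substRowEs k R es) (some n)
              else RTy.record (substRowEs k R es) (some (n - 1))) = _
            rw [if_neg h1, if_neg h2]
            simp only [den, NTy.recd.injEq]
            funext ℓ
            rw [ents_substRowEs, ents_vInsR]
            congr 1
            show v.2 (n - 1) ℓ = if n < k then v.2 n ℓ else if n = k then denRow v R ℓ else v.2 (n - 1) ℓ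
            rw [if_neg h2, if_neg h1]
  | .rall L A, v, k, R => by
      simp only [substRowTy, den]
      rw [den_substRow A (underR v) (k + 1) (shiftRowRRow 0 R)]
      have : denRow (underR v) (shiftRowRRow 0 R) = fun ℓ => rshPS (denRow v R ℓ) :=
        funext fun ℓ => denRow_shiftRowRRow v R ℓ
      rw [this, vInsR_underR]
  | .pall A, v, k, R => by
      simp only [substRowTy, den]
      rw [den_substRow A (underP v) k (shiftPreRRow 0 R)]
      have : denRow (underP v) (shiftPreRRow 0 R) = fun ℓ => pshPS (denRow v R ℓ) :=
        funext fun ℓ => denRow_shiftPreRRow v R ℓ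
      rw [this, vInsR_underP]

/-! #### Interpretation respects type equivalence -/

lemma entryPS_abs (v ℓ ℓ' A) : entryPS v ℓ (ℓ', Pre.abs, A) = PS.bot := by
  apply PS.ext
  · simp [entryPS, denP, PS.bot]
  · intro n; simp [entryPS, denP, PS.bot]
  · intro n; rfl

theorem den_equiv {A B : RTy} (h : TyEquiv A B) : ∀ v, den v A = den v B := by
  induction h with
  | refl A => intro v; rfl
  | symm _ ih => intro v; exact (ih v).symm
  | trans _ _ ih1 ih2 => intro v; rw [ih1, ih2]
  | arrow _ _ ih1 ih2 => intro v; simp only [den]; rw [ih1, ih2]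
  | rall _ ih => intro v; simp only [den]; rw [ih]
  | pall _ ih => intro v; simp only [den]; rw [ih]
  | recordCongr hproj _ _ =>
      intro v
      simp only [den, NTy.recd.injEq]
      funext ℓ
      rw [ents_proj_congr v ℓ hproj]
  | recordPerm hperm =>
      intro v
      simp only [den, NTy.recd.injEq]
      funext ℓ
      rw [ents_perm v ℓ hperm]
  | recordAbsent =>
      intro v
      simp only [den, NTy.recd.injEq]
      funext ℓ
      rw [ents_append, ents_append, ents_cons, entryPS_abs, joinPS_bot_left]
/-! #### A semantic type system for erased terms, and soundness -/

inductive SHT : List NTy → UTm → NTy → Prop where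
  | var {Γ n g} : Γ[n]? = some g → SHT Γ (.var n) g
  | lam {Γ u s b} : SHT (s :: Γ) u b → SHT Γ (.lam u) (.arr s b)
  | app {Γ u w s b} : SHT Γ u (.arr s b) → SHT Γ w s → SHT Γ (.app u w) b
  | rcd {Γ us f} : (∀ ℓ, (f ℓ).1 = true → ℓ ∈ us.map Prod.fst) →
      SHT Γ (.record us) (.recd f)
  | prj {Γ u f ℓ g} : SHT Γ u (.recd f) → (f ℓ).1 = true → SHT Γ (.proj u ℓ) g
  | rintro {Γ u N} : (∀ ρ : Label → Bool, SHT Γ u (rsubst 0 ρ N)) →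
      SHT Γ u (.allR N)
  | relim {Γ u N} (ρ : Label → Bool) : SHT Γ u (.allR N) → SHT Γ u (rsubst 0 ρ N)
  | pintro {Γ u N} : (∀ c : Bool, SHT Γ u (psubst 0 c N)) → SHT Γ u (.allP N)
  | pelim {Γ u N} (c : Bool) : SHT Γ u (.allP N) → SHT Γ u (psubst 0 c N)

def ClosedVal (v : Val) : Prop :=
  (∀ n k, (v.1 n).2 k = false) ∧
  (∀ m ℓ k, (v.2 m ℓ).2.1 k = false) ∧ (∀ m ℓ k, (v.2 m ℓ).2.2 k = false)

def cPP (c : Bool) : PP := (c, fun _ => false)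
def cRow (ρ : Label → Bool) : Label → PS := fun ℓ => (ρ ℓ, fun _ => false, fun _ => false)

lemma closed_consP (c : Bool) {v} (h : ClosedVal v) : ClosedVal (vInsP 0 (cPP c) v) := by
  refine ⟨?_, h.2.1, h.2.2⟩
  intro n k
  cases n with
  | zero => rfl
  | succ m => exact h.1 m k

lemma closed_consR (ρ : Label → Bool) {v} (h : ClosedVal v) :
    ClosedVal (vInsR 0 (cRow ρ) v) := by
  refine ⟨h.1, ?_, ?_⟩
  · intro m ℓ k
    cases m with
    | zero => rfl
    | succ s => exact h.2.1 s ℓ k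
  · intro m ℓ k
    cases m with
    | zero => rfl
    | succ s => exact h.2.2 s ℓ k

lemma denP_closed {v} (h : ClosedVal v) (P) : denP v P = cPP (denP v P).1 := by
  cases P with
  | abs => rfl
  | pres => rfl
  | pvar n => exact PP.ext rfl (fun k => h.1 n k)

lemma entryV_closed {v} (h : ClosedVal v) (ℓ n q) : entryV v ℓ n q = false := by
  have : (denP v q.2.1).2 n = false := by
    rw [denP_closed h]
    rfl
  simp [entryV, this]

lemma denRow_closed {v} (h : ClosedVal v) (R ℓ) :
    denRow v R ℓ = cRow (fun ℓ' => (denRow v R ℓ').1) ℓ := by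
  apply PS.ext
  · rfl
  · intro n
    show ((entsPS v R.1 ℓ).2.1 n || (tailPS v R.2 ℓ).2.1 n) = false
    have h1 : (entsPS v R.1 ℓ).2.1 n = false := by
      show R.1.any (entryV v ℓ n) = false
      simp only [List.any_eq_false]
      intro q _
      simp [entryV_closed h]
    have h2 : (tailPS v R.2 ℓ).2.1 n = false := by
      cases hR : R.2 with
      | none => rfl
      | some m => exact h.2.1 m ℓ n
    simp [h1, h2]
  · intro n
    show ((entsPS v R.1 ℓ).2.2 n || (tailPS v R.2 ℓ).2.2 n) = false
    have h2 : (tailPS v R.2 ℓ).2.2 n = false := by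
      cases hR : R.2 with
      | none => rfl
      | some m => exact h.2.2 m ℓ n
    simp [entsPS, h2]

lemma vMapP_underP0 (c v) : vMapP 0 c (underP v) = vInsP 0 (cPP c) v := by
  apply Val.ext
  · intro n
    cases n with
    | zero =>
        apply PP.ext
        · simp [vMapP, underP, psubstPP, pv0, cPP, vInsP]
        · intro k; simp [vMapP, underP, psubstPP, pv0, cPP, vInsP, delF]
    | succ m =>
        apply PP.ext
        · simp [vMapP, underP, psubstPP, pshPP, vInsP]
        · intro k; simp [vMapP, underP, psubstPP, pshPP, vInsP, delF]
  · intro m ℓ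
    apply PS.ext
    · simp [vMapP, underP, psubstPS, pshPS, vInsP]
    · intro k; simp [vMapP, underP, psubstPS, pshPS, vInsP, delF]
    · intro k; rfl

lemma vMapR_underR0 (ρ v) : vMapR 0 ρ (underR v) = vInsR 0 (cRow ρ) v := by
  apply Val.ext
  · intro n; rfl
  · intro m ℓ
    cases m with
    | zero =>
        apply PS.ext
        · simp [vMapR, underR, rsubstPS, rv0, cRow, vInsR]
        · intro k; rfl
        · intro k; simp [vMapR, underR, rsubstPS, rv0, cRow, vInsR, delF]
    | succ s =>
        apply PS.ext
        · simp [vMapR, underR, rsubstPS, rshPS, vInsR]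
        · intro k; rfl
        · intro k; simp [vMapR, underR, rsubstPS, rshPS, vInsR, delF]

lemma vShiftR0_vInsR0 (x v) : vShiftR 0 (vInsR 0 x v) = v := by
  apply Val.ext
  · intro n; rfl
  · intro m ℓ; simp [vShiftR, vInsR]

lemma vShiftP0_vInsP0 (x v) : vShiftP 0 (vInsP 0 x v) = v := by
  apply Val.ext
  · intro n; simp [vShiftP, vInsP]
  · intro m ℓ; rfl

lemma ctx_shiftR (x) (v : Val) : ∀ (Δ : List RTy),
    (Δ.map (shiftRowTy 0)).map (den (vInsR 0 x v)) = Δ.map (den v) := by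
  intro Δ
  induction Δ with
  | nil => rfl
  | cons B Δ ih =>
      simp only [List.map_cons, ih, List.cons.injEq, and_true]
      rw [den_shiftR, vShiftR0_vInsR0]

lemma ctx_shiftP (x) (v : Val) : ∀ (Δ : List RTy),
    (Δ.map (shiftPreTy 0)).map (den (vInsP 0 x v)) = Δ.map (den v) := by
  intro Δ
  induction Δ with
  | nil => rfl
  | cons B Δ ih =>
      simp only [List.map_cons, ih, List.cons.injEq, and_true]
      rw [den_shiftP, vShiftP0_vInsP0]

lemma eraseTEs_fst : ∀ es : List (Label × RTm),
    (eraseTEs es).map Prod.fst = es.map Prod.fst := by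
  intro es
  induction es with
  | nil => rfl
  | cons q es ih =>
      obtain ⟨ℓ, M⟩ := q
      show (eraseTEs ((ℓ, M) :: es)).map Prod.fst = _
      rw [eraseTEs]
      simp [ih]

lemma lookup_pres_any (v ℓ) : ∀ (res : List (Label × Pre × RTy)) A,
    List.lookup ℓ res = some (Pre.pres, A) → res.any (entryY v ℓ) = true := by
  intro res
  induction res with
  | nil => intro A h; simp [List.lookup] at h
  | cons q res ih =>
      intro A h
      obtain ⟨ℓ', x⟩ := q
      cases hb : ℓ == ℓ' with
      | true =>
          simp only [List.lookup, hb] at h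
          injection h with h
          subst h
          have hle : ℓ' = ℓ := (beq_iff_eq.1 hb).symm
          simp [List.any_cons, entryY, hle, denP]
      | false =>
          simp only [List.lookup, hb] at h
          simp [List.any_cons, ih A h]

theorem sound {Δ M A} (d : RHasTy Δ M A) :
    ∀ v, ClosedVal v → SHT (Δ.map (den v)) (eraseT M) (den v A) := by
  induction d with
  | var h =>
      intro v hv
      exact SHT.var (by rw [List.getElem?_map, h]; rfl)
  | lam _ ih =>
      intro v hv
      exact SHT.lam (ih v hv)
  | app _ _ ih1 ih2 =>
      intro v hv
      exact SHT.app (ih1 v hv) (ih2 v hv)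
  | @record Γ es res hlab hcomp ih =>
      intro v hv
      show SHT _ (UTm.record (eraseTEs es)) (den v (.record res none))
      refine SHT.rcd ?_
      intro ℓ hy
      have h3 : res.any (entryY v ℓ) = true := by
        have : (joinPS (entsPS v res ℓ) (tailPS v none ℓ)).1 = true := hy
        simpa [joinPS, tailPS, PS.bot, entsPS] using this
      rw [List.any_eq_true] at h3
      obtain ⟨q, hq, he⟩ := h3
      have hql : q.1 = ℓ := by
        rw [entryY, Bool.and_eq_true] at he
        exact beq_iff_eq.1 he.1
      rw [eraseTEs_fst, hlab]
      exact List.mem_map.2 ⟨q, hq, hql⟩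
  | @proj Γ res r M ℓ A hM hlk ihM =>
      intro v hv
      refine SHT.prj (ihM v hv) ?_
      show (joinPS (entsPS v res ℓ) (tailPS v r ℓ)).1 = true
      have := lookup_pres_any v ℓ res A hlk
      simp [joinPS, entsPS, this]
  | @rlam Γ L M A _ ih =>
      intro v hv
      refine SHT.rintro ?_
      intro ρ
      show SHT _ (eraseT M) (rsubst 0 ρ (den (underR v) A))
      rw [den_vMapR, vMapR_underR0]
      have h2 := ih (vInsR 0 (cRow ρ) v) (closed_consR ρ hv)
      rwa [ctx_shiftR] at h2
  | @rapp Γ L M A R _ ih =>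
      intro v hv
      have h1 : SHT (Γ.map (den v)) (eraseT M) (.allR (den (underR v) A)) := ih v hv
      have h2 := SHT.relim (fun ℓ => (denRow v R ℓ).1) h1
      rw [den_vMapR, vMapR_underR0] at h2
      show SHT _ (eraseT M) (den v (substRowTy 0 R A))
      rw [den_substRow]
      have hr : cRow (fun ℓ => (denRow v R ℓ).1) = denRow v R :=
        funext fun ℓ => (denRow_closed hv R ℓ).symm
      rwa [← hr]
  | @plam Γ M A _ ih =>
      intro v hv
      refine SHT.pintro ?_
      intro c
      show SHT _ (eraseT M) (psubst 0 c (den (underP v) A))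
      rw [den_vMapP, vMapP_underP0]
      have h2 := ih (vInsP 0 (cPP c) v) (closed_consP c hv)
      rwa [ctx_shiftP] at h2
  | @papp Γ M A P _ ih =>
      intro v hv
      have h1 : SHT (Γ.map (den v)) (eraseT M) (.allP (den (underP v) A)) := ih v hv
      have h2 := SHT.pelim (denP v P).1 h1
      rw [den_vMapP, vMapP_underP0] at h2
      show SHT _ (eraseT M) (den v (substPreTy 0 P A))
      rw [den_substPre]
      rwa [denP_closed hv P]
  | conv _ heq ih =>
      intro v hv
      rw [← den_equiv heq v]
      exact ih v hv
/-! #### Reachability by instantiation, and the variable closure -/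

def l0 : Label := 0

inductive NStep : NTy → NTy → Prop where
  | r {N} (ρ : Label → Bool) : NStep (.allR N) (rsubst 0 ρ N)
  | p {N} (c : Bool) : NStep (.allP N) (psubst 0 c N)

abbrev NReach := Relation.ReflTransGen NStep

lemma nstep_arr {s b g} : ¬ NStep (.arr s b) g := fun h => by cases h
lemma nstep_recd {f g} : ¬ NStep (.recd f) g := fun h => by cases h
lemma nstep_tv {n g} : ¬ NStep (.tv n) g := fun h => by cases h

lemma reach_arr {s b g} (h : NReach (.arr s b) g) : g = .arr s b := by
  rcases Relation.ReflTransGen.cases_head h with h' | ⟨c, hc, _⟩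
  · exact h'.symm
  · exact absurd hc nstep_arr

lemma reach_recd {f g} (h : NReach (.recd f) g) : g = .recd f := by
  rcases Relation.ReflTransGen.cases_head h with h' | ⟨c, hc, _⟩
  · exact h'.symm
  · exact absurd hc nstep_recd

lemma reach_tv {n g} (h : NReach (.tv n) g) : g = .tv n := by
  rcases Relation.ReflTransGen.cases_head h with h' | ⟨c, hc, _⟩
  · exact h'.symm
  · exact absurd hc nstep_tv

def hgt : NTy → ℕ
  | .allR N => hgt N + 1
  | .allP N => hgt N + 1
  | _ => 0

theorem hgt_psubst : ∀ (N : NTy) (k : ℕ) (c : Bool), hgt (psubst k c N) = hgt N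
  | .tv _, _, _ => rfl
  | .arr _ _, _, _ => rfl
  | .recd _, _, _ => rfl
  | .allR N, k, c => by simp [psubst, hgt, hgt_psubst N k c]
  | .allP N, k, c => by simp [psubst, hgt, hgt_psubst N (k + 1) c]

theorem hgt_rsubst : ∀ (N : NTy) (k : ℕ) (ρ : Label → Bool), hgt (rsubst k ρ N) = hgt N
  | .tv _, _, _ => rfl
  | .arr _ _, _, _ => rfl
  | .recd _, _, _ => rfl
  | .allR N, k, ρ => by simp [rsubst, hgt, hgt_rsubst N (k + 1) ρ]
  | .allP N, k, ρ => by simp [rsubst, hgt, hgt_rsubst N k ρ]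

def EmpLeaf : NTy → Prop
  | .arr _ _ => False
  | .tv _ => False
  | .recd f => ∀ ℓ, (f ℓ).1 = false
  | _ => True

def Emp (g : NTy) : Prop := ∀ g', NReach g g' → EmpLeaf g'
def Xi (g : NTy) : Prop := ∀ g' f, NReach g g' → g' = .recd f → (f l0).1 = true
def Pl (g : NTy) : Prop := ∃ f, NReach g (.recd f) ∧ (f l0).1 = true

def NB : NTy → Prop
  | .allR _ => False
  | .allP _ => False
  | _ => True

lemma exists_leaf : ∀ (n : ℕ) (g : NTy), hgt g ≤ n → ∃ g', NReach g g' ∧ NB g' := by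
  intro n
  induction n with
  | zero =>
      intro g h
      cases g with
      | allR N => simp [hgt] at h
      | allP N => simp [hgt] at h
      | tv m => exact ⟨NTy.tv m, Relation.ReflTransGen.refl, trivial⟩
      | arr s b => exact ⟨NTy.arr s b, Relation.ReflTransGen.refl, trivial⟩
      | recd f => exact ⟨NTy.recd f, Relation.ReflTransGen.refl, trivial⟩
  | succ n ih =>
      intro g h
      cases g with
      | allR N =>
          obtain ⟨g', h1, h2⟩ := ih (rsubst 0 (fun _ => false) N)
            (by rw [hgt_rsubst]; simp [hgt] at h; omega)
          exact ⟨g', Relation.ReflTransGen.head (NStep.r _) h1, h2⟩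
      | allP N =>
          obtain ⟨g', h1, h2⟩ := ih (psubst 0 false N)
            (by rw [hgt_psubst]; simp [hgt] at h; omega)
          exact ⟨g', Relation.ReflTransGen.head (NStep.p _) h1, h2⟩
      | tv m => exact ⟨NTy.tv m, Relation.ReflTransGen.refl, trivial⟩
      | arr s b => exact ⟨NTy.arr s b, Relation.ReflTransGen.refl, trivial⟩
      | recd f => exact ⟨NTy.recd f, Relation.ReflTransGen.refl, trivial⟩

inductive Cl (x : NTy) : NTy → Prop where
  | base : Cl x x
  | er {N} (ρ : Label → Bool) : Cl x (.allR N) → Cl x (rsubst 0 ρ N)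
  | ep {N} (c : Bool) : Cl x (.allP N) → Cl x (psubst 0 c N)
  | ir {N} : (∀ ρ : Label → Bool, Cl x (rsubst 0 ρ N)) → Cl x (.allR N)
  | ip {N} : (∀ c : Bool, Cl x (psubst 0 c N)) → Cl x (.allP N)

lemma cl_reach_nb {x g} (hc : Cl x g) : ∀ g', NReach g g' → NB g' → NReach x g' := by
  induction hc with
  | base => intro g' hr _; exact hr
  | er ρ _ ih => intro g' hr hnb; exact ih g' (Relation.ReflTransGen.head (NStep.r ρ) hr) hnb
  | ep c _ ih => intro g' hr hnb; exact ih g' (Relation.ReflTransGen.head (NStep.p c) hr) hnb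
  | ir _ ih =>
      intro g' hr hnb
      rcases Relation.ReflTransGen.cases_head hr with h' | ⟨y, hy, hr'⟩
      · subst h'; exact absurd hnb (by simp [NB])
      · cases hy with
        | r ρ => exact ih ρ g' hr' hnb
  | ip _ ih =>
      intro g' hr hnb
      rcases Relation.ReflTransGen.cases_head hr with h' | ⟨y, hy, hr'⟩
      · subst h'; exact absurd hnb (by simp [NB])
      · cases hy with
        | p c => exact ih c g' hr' hnb

lemma cl_xi {x g} (hc : Cl x g) (hx : Xi x) : Xi g := by
  induction hc with
  | base => exact hx
  | er ρ _ ih => intro g' f hr hf; exact ih g' f (Relation.ReflTransGen.head (NStep.r ρ) hr) hf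
  | ep c _ ih => intro g' f hr hf; exact ih g' f (Relation.ReflTransGen.head (NStep.p c) hr) hf
  | ir _ ih =>
      intro g' f hr hf
      rcases Relation.ReflTransGen.cases_head hr with h' | ⟨y, hy, hr'⟩
      · rw [← h'] at hf; cases hf
      · cases hy with
        | r ρ => exact ih ρ g' f hr' hf
  | ip _ ih =>
      intro g' f hr hf
      rcases Relation.ReflTransGen.cases_head hr with h' | ⟨y, hy, hr'⟩
      · rw [← h'] at hf; cases hf
      · cases hy with
        | p c => exact ih c g' f hr' hf

lemma cl_emp {x g} (hc : Cl x g) (hx : Emp x) : Emp g := by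
  induction hc with
  | base => exact hx
  | er ρ _ ih => intro g' hr; exact ih g' (Relation.ReflTransGen.head (NStep.r ρ) hr)
  | ep c _ ih => intro g' hr; exact ih g' (Relation.ReflTransGen.head (NStep.p c) hr)
  | ir _ ih =>
      intro g' hr
      rcases Relation.ReflTransGen.cases_head hr with h' | ⟨y, hy, hr'⟩
      · subst h'; trivial
      · cases hy with
        | r ρ => exact ih ρ g' hr'
  | ip _ ih =>
      intro g' hr
      rcases Relation.ReflTransGen.cases_head hr with h' | ⟨y, hy, hr'⟩
      · subst h'; trivial
      · cases hy with
        | p c => exact ih c g' hr'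

/-! #### Inversion lemmas for the semantic type system -/

lemma sht_var_cl {Γ u g} (h : SHT Γ u g) : ∀ i x, u = .var i → Γ[i]? = some x →
    Cl x g := by
  induction h with
  | var hg =>
      intro i x hu hx
      injection hu with hn
      subst hn
      rw [hg] at hx
      injection hx with hx
      rw [← hx]
      exact Cl.base
  | lam _ _ => intro i x hu _; simp at hu
  | app _ _ _ _ => intro i x hu _; simp at hu
  | rcd _ => intro i x hu _; simp at hu
  | prj _ _ _ => intro i x hu _; simp at hu
  | rintro _ ih => intro i x hu hx; exact Cl.ir (fun ρ => ih ρ i x hu hx)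
  | relim ρ _ ih => intro i x hu hx; exact Cl.er ρ (ih i x hu hx)
  | pintro _ ih => intro i x hu hx; exact Cl.ip (fun c => ih c i x hu hx)
  | pelim c _ ih => intro i x hu hx; exact Cl.ep c (ih i x hu hx)

lemma sht_lam_inv {Γ u g} (h : SHT Γ u g) : ∀ w, u = .lam w → ∀ s b,
    NReach g (.arr s b) → SHT (s :: Γ) w b := by
  induction h with
  | var _ => intro w hu; simp at hu
  | lam hb =>
      intro w hu s b hr
      injection hu with hw
      subst hw
      have := reach_arr hr
      injection this with h1 h2
      subst h1; subst h2
      exact hb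
  | app _ _ _ _ => intro w hu; simp at hu
  | rcd _ => intro w hu; simp at hu
  | prj _ _ _ => intro w hu; simp at hu
  | rintro _ ih =>
      intro w hu s b hr
      rcases Relation.ReflTransGen.cases_head hr with h' | ⟨y, hy, hr'⟩
      · simp at h'
      · cases hy with
        | r ρ => exact ih ρ w hu s b hr'
  | relim ρ _ ih =>
      intro w hu s b hr
      exact ih w hu s b (Relation.ReflTransGen.head (NStep.r ρ) hr)
  | pintro _ ih =>
      intro w hu s b hr
      rcases Relation.ReflTransGen.cases_head hr with h' | ⟨y, hy, hr'⟩
      · simp at h'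
      · cases hy with
        | p c => exact ih c w hu s b hr'
  | pelim c _ ih =>
      intro w hu s b hr
      exact ih w hu s b (Relation.ReflTransGen.head (NStep.p c) hr)

lemma sht_lam_noleaf {Γ u g} (h : SHT Γ u g) : ∀ w, u = .lam w → ∀ g',
    NReach g g' → (∀ f, g' ≠ .recd f) ∧ (∀ n, g' ≠ .tv n) := by
  induction h with
  | var _ => intro w hu; simp at hu
  | lam _ =>
      intro w hu g' hr
      rw [reach_arr hr]
      exact ⟨(fun f h => nomatch h), (fun n h => nomatch h)⟩
  | app _ _ _ _ => intro w hu; simp at hu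
  | rcd _ => intro w hu; simp at hu
  | prj _ _ _ => intro w hu; simp at hu
  | rintro _ ih =>
      intro w hu g' hr
      rcases Relation.ReflTransGen.cases_head hr with h' | ⟨y, hy, hr'⟩
      · subst h'; exact ⟨(fun f h => nomatch h), (fun n h => nomatch h)⟩
      · cases hy with
        | r ρ => exact ih ρ w hu g' hr'
  | relim ρ _ ih =>
      intro w hu g' hr
      exact ih w hu g' (Relation.ReflTransGen.head (NStep.r ρ) hr)
  | pintro _ ih =>
      intro w hu g' hr
      rcases Relation.ReflTransGen.cases_head hr with h' | ⟨y, hy, hr'⟩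
      · subst h'; exact ⟨(fun f h => nomatch h), (fun n h => nomatch h)⟩
      · cases hy with
        | p c => exact ih c w hu g' hr'
  | pelim c _ ih =>
      intro w hu g' hr
      exact ih w hu g' (Relation.ReflTransGen.head (NStep.p c) hr)

lemma sht_rec_emp {Γ u g} (h : SHT Γ u g) : u = .record [] → Emp g := by
  induction h with
  | var _ => intro hu; simp at hu
  | lam _ _ => intro hu; simp at hu
  | app _ _ _ _ => intro hu; simp at hu
  | @rcd Γ' us f hcond =>
      intro hu g' hr
      injection hu with hus
      subst hus
      rw [reach_recd hr]
      intro ℓ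
      cases hfl : (f ℓ).1 with
      | false => rfl
      | true => simpa using hcond ℓ hfl
  | prj _ _ _ => intro hu; simp at hu
  | rintro _ ih =>
      intro hu g' hr
      rcases Relation.ReflTransGen.cases_head hr with h' | ⟨y, hy, hr'⟩
      · subst h'; trivial
      · cases hy with
        | r ρ => exact ih ρ hu g' hr'
  | relim ρ _ ih =>
      intro hu g' hr
      exact ih hu g' (Relation.ReflTransGen.head (NStep.r ρ) hr)
  | pintro _ ih =>
      intro hu g' hr
      rcases Relation.ReflTransGen.cases_head hr with h' | ⟨y, hy, hr'⟩
      · subst h'; trivial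
      · cases hy with
        | p c => exact ih c hu g' hr'
  | pelim c _ ih =>
      intro hu g' hr
      exact ih hu g' (Relation.ReflTransGen.head (NStep.p c) hr)

lemma sht_proj_inv {Γ u g} (h : SHT Γ u g) : ∀ w ℓ, u = .proj w ℓ →
    ∃ f, SHT Γ w (.recd f) ∧ (f ℓ).1 = true := by
  induction h with
  | var _ => intro w ℓ hu; simp at hu
  | lam _ _ => intro w ℓ hu; simp at hu
  | app _ _ _ _ => intro w ℓ hu; simp at hu
  | rcd _ => intro w ℓ hu; simp at hu
  | prj hu' hy =>
      intro w ℓ hu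
      injection hu with h1 h2
      subst h1; subst h2
      exact ⟨_, hu', hy⟩
  | rintro _ ih => intro w ℓ hu; exact ih (fun _ => false) w ℓ hu
  | relim ρ _ ih => intro w ℓ hu; exact ih w ℓ hu
  | pintro _ ih => intro w ℓ hu; exact ih false w ℓ hu
  | pelim c _ ih => intro w ℓ hu; exact ih w ℓ hu

lemma sht_app_inv {Γ u g} (h : SHT Γ u g) : ∀ w1 w2, u = .app w1 w2 →
    ∃ s b, SHT Γ w1 (.arr s b) ∧ SHT Γ w2 s := by
  induction h with
  | var _ => intro w1 w2 hu; simp at hu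
  | lam _ _ => intro w1 w2 hu; simp at hu
  | app h1 h2 _ _ =>
      intro w1 w2 hu
      injection hu with e1 e2
      subst e1; subst e2
      exact ⟨_, _, h1, h2⟩
  | rcd _ => intro w1 w2 hu; simp at hu
  | prj _ _ _ => intro w1 w2 hu; simp at hu
  | rintro _ ih => intro w1 w2 hu; exact ih (fun _ => false) w1 w2 hu
  | relim ρ _ ih => intro w1 w2 hu; exact ih w1 w2 hu
  | pintro _ ih => intro w1 w2 hu; exact ih false w1 w2 hu
  | pelim c _ ih => intro w1 w2 hu; exact ih w1 w2 hu
/-! #### Pairing instances across a substituted binder -/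

lemma forward_psubst (c : Bool) {N M : NTy} (h : NReach N M) :
    NReach (psubst 0 c N) (psubst 0 c M) := by
  induction h with
  | refl => exact Relation.ReflTransGen.refl
  | tail _ hstep ih =>
      cases hstep with
      | @r K ρ =>
          refine ih.tail ?_
          show NStep (psubst 0 c (.allR K)) _
          have : NStep (.allR (psubst 0 c K)) (rsubst 0 ρ (psubst 0 c K)) := NStep.r ρ
          rw [← psubst_rsubst] at this
          exact this
      | @p K c' =>
          refine ih.tail ?_
          show NStep (psubst 0 c (.allP K)) _
          have : NStep (.allP (psubst 1 c K)) (psubst 0 c' (psubst 1 c K)) := NStep.p c'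
          rw [psubst_psubst c c' K 0 0 (le_refl 0)] at this
          exact this

lemma forward_rsubst (ρ0 : Label → Bool) {N M : NTy} (h : NReach N M) :
    NReach (rsubst 0 ρ0 N) (rsubst 0 ρ0 M) := by
  induction h with
  | refl => exact Relation.ReflTransGen.refl
  | tail _ hstep ih =>
      cases hstep with
      | @r K ρ =>
          refine ih.tail ?_
          show NStep (rsubst 0 ρ0 (.allR K)) _
          have : NStep (.allR (rsubst 1 ρ0 K)) (rsubst 0 ρ (rsubst 1 ρ0 K)) := NStep.r ρ
          rw [rsubst_rsubst ρ0 ρ K 0 0 (le_refl 0)] at this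
          exact this
      | @p K c' =>
          refine ih.tail ?_
          show NStep (rsubst 0 ρ0 (.allP K)) _
          have : NStep (.allP (rsubst 0 ρ0 K)) (psubst 0 c' (rsubst 0 ρ0 K)) := NStep.p c'
          rw [psubst_rsubst] at this
          exact this

lemma pair_psubst (c : Bool) : ∀ {X g : NTy}, NReach X g → ∀ N, X = psubst 0 c N →
    ∃ M, NReach N M ∧ g = psubst 0 c M := by
  intro X g h
  induction h using Relation.ReflTransGen.head_induction_on with
  | refl => intro N hN; exact ⟨N, Relation.ReflTransGen.refl, hN⟩
  | head hstep _ ih =>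
      intro N hN
      cases hstep with
      | @r K ρ =>
          cases N with
          | allR N0 =>
              rw [show psubst 0 c (NTy.allR N0) = .allR (psubst 0 c N0) from rfl] at hN
              injection hN with hK
              have hy : rsubst 0 ρ K = psubst 0 c (rsubst 0 ρ N0) := by
                rw [hK, psubst_rsubst]
              obtain ⟨M, hM1, hM2⟩ := ih _ hy
              exact ⟨M, Relation.ReflTransGen.head (NStep.r ρ) hM1, hM2⟩
          | tv m => simp [psubst] at hN
          | arr s b => simp [psubst] at hN
          | recd f => simp [psubst] at hN
          | allP N0 => simp [psubst] at hN
      | @p K c' =>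
          cases N with
          | allP N0 =>
              rw [show psubst 0 c (NTy.allP N0) = .allP (psubst 1 c N0) from rfl] at hN
              injection hN with hK
              have hy : psubst 0 c' K = psubst 0 c (psubst 0 c' N0) := by
                rw [hK, psubst_psubst c c' N0 0 0 (le_refl 0)]
              obtain ⟨M, hM1, hM2⟩ := ih _ hy
              exact ⟨M, Relation.ReflTransGen.head (NStep.p c') hM1, hM2⟩
          | tv m => simp [psubst] at hN
          | arr s b => simp [psubst] at hN
          | recd f => simp [psubst] at hN
          | allR N0 => simp [psubst] at hN

lemma pair_rsubst (ρ0 : Label → Bool) : ∀ {X g : NTy}, NReach X g → ∀ N,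
    X = rsubst 0 ρ0 N → ∃ M, NReach N M ∧ g = rsubst 0 ρ0 M := by
  intro X g h
  induction h using Relation.ReflTransGen.head_induction_on with
  | refl => intro N hN; exact ⟨N, Relation.ReflTransGen.refl, hN⟩
  | head hstep _ ih =>
      intro N hN
      cases hstep with
      | @r K ρ =>
          cases N with
          | allR N0 =>
              rw [show rsubst 0 ρ0 (NTy.allR N0) = .allR (rsubst 1 ρ0 N0) from rfl] at hN
              injection hN with hK
              have hy : rsubst 0 ρ K = rsubst 0 ρ0 (rsubst 0 ρ N0) := by
                rw [hK, rsubst_rsubst ρ0 ρ N0 0 0 (le_refl 0)]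
              obtain ⟨M, hM1, hM2⟩ := ih _ hy
              exact ⟨M, Relation.ReflTransGen.head (NStep.r ρ) hM1, hM2⟩
          | tv m => simp [rsubst] at hN
          | arr s b => simp [rsubst] at hN
          | recd f => simp [rsubst] at hN
          | allP N0 => simp [rsubst] at hN
      | @p K c' =>
          cases N with
          | allP N0 =>
              rw [show rsubst 0 ρ0 (NTy.allP N0) = .allP (rsubst 0 ρ0 N0) from rfl] at hN
              injection hN with hK
              have hy : psubst 0 c' K = rsubst 0 ρ0 (psubst 0 c' N0) := by
                rw [hK, psubst_rsubst]
              obtain ⟨M, hM1, hM2⟩ := ih _ hy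
              exact ⟨M, Relation.ReflTransGen.head (NStep.p c') hM1, hM2⟩
          | tv m => simp [rsubst] at hN
          | arr s b => simp [rsubst] at hN
          | recd f => simp [rsubst] at hN
          | allR N0 => simp [rsubst] at hN

/-! #### Occurrence of the outermost bound variable at the core -/

def opv : NTy → ℕ → Bool
  | .recd f, k => (f l0).2.1 k
  | .allP N, k => opv N (k + 1)
  | .allR N, k => opv N k
  | _, _ => false

def orv : NTy → ℕ → Bool
  | .recd f, k => (f l0).2.2 k
  | .allP N, k => orv N k
  | .allR N, k => orv N (k + 1)
  | _, _ => false

theorem opv_psubst : ∀ (N : NTy) (j : ℕ) (c : Bool) (k : ℕ),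
    opv (psubst j c N) k = opv N (if k < j then k else k + 1)
  | .tv _, _, _, _ => rfl
  | .arr _ _, _, _, _ => rfl
  | .recd f, j, c, k => by
      show delF j (f l0).2.1 k = (f l0).2.1 (if k < j then k else k + 1)
      simp only [delF]
      split_ifs <;> rfl
  | .allR N, j, c, k => by
      show opv (psubst j c N) k = opv N (if k < j then k else k + 1)
      exact opv_psubst N j c k
  | .allP N, j, c, k => by
      show opv (psubst (j + 1) c N) (k + 1) = opv N ((if k < j then k else k + 1) + 1)
      rw [opv_psubst N (j + 1) c (k + 1)]
      congr 1
      by_cases h : k < j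
      · rw [if_pos (by omega : k + 1 < j + 1), if_pos h]
      · rw [if_neg (by omega : ¬ (k + 1 < j + 1)), if_neg h]

theorem opv_rsubst : ∀ (N : NTy) (j : ℕ) (ρ : Label → Bool) (k : ℕ),
    opv (rsubst j ρ N) k = opv N k
  | .tv _, _, _, _ => rfl
  | .arr _ _, _, _, _ => rfl
  | .recd f, j, ρ, k => rfl
  | .allR N, j, ρ, k => opv_rsubst N (j + 1) ρ k
  | .allP N, j, ρ, k => opv_rsubst N j ρ (k + 1)

theorem orv_psubst : ∀ (N : NTy) (j : ℕ) (c : Bool) (k : ℕ),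
    orv (psubst j c N) k = orv N k
  | .tv _, _, _, _ => rfl
  | .arr _ _, _, _, _ => rfl
  | .recd f, j, c, k => rfl
  | .allR N, j, c, k => orv_psubst N j c (k + 1)
  | .allP N, j, c, k => orv_psubst N (j + 1) c k

theorem orv_rsubst : ∀ (N : NTy) (j : ℕ) (ρ : Label → Bool) (k : ℕ),
    orv (rsubst j ρ N) k = orv N (if k < j then k else k + 1)
  | .tv _, _, _, _ => rfl
  | .arr _ _, _, _, _ => rfl
  | .recd f, j, ρ, k => by
      show delF j (f l0).2.2 k = (f l0).2.2 (if k < j then k else k + 1)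
      simp only [delF]
      split_ifs <;> rfl
  | .allP N, j, ρ, k => by
      show orv (rsubst j ρ N) k = orv N (if k < j then k else k + 1)
      exact orv_rsubst N j ρ k
  | .allR N, j, ρ, k => by
      show orv (rsubst (j + 1) ρ N) (k + 1) = orv N ((if k < j then k else k + 1) + 1)
      rw [orv_rsubst N (j + 1) ρ (k + 1)]
      congr 1
      by_cases h : k < j
      · rw [if_pos (by omega : k + 1 < j + 1), if_pos h]
      · rw [if_neg (by omega : ¬ (k + 1 < j + 1)), if_neg h]

lemma reach_opv {S g : NTy} (h : NReach S g) : ∀ f, g = .recd f → ∀ k,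
    (f l0).2.1 k = opv S k := by
  induction h using Relation.ReflTransGen.head_induction_on with
  | refl => intro f hf k; subst hf; rfl
  | head hstep _ ih =>
      intro f hf k
      cases hstep with
      | @r K ρ =>
          rw [ih f hf k, opv_rsubst]
          rfl
      | @p K c =>
          rw [ih f hf k, opv_psubst]
          rw [if_neg (Nat.not_lt_zero k)]
          rfl

lemma reach_orv {S g : NTy} (h : NReach S g) : ∀ f, g = .recd f → ∀ k,
    (f l0).2.2 k = orv S k := by
  induction h using Relation.ReflTransGen.head_induction_on with
  | refl => intro f hf k; subst hf; rfl
  | head hstep _ ih =>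
      intro f hf k
      cases hstep with
      | @p K c =>
          rw [ih f hf k, orv_psubst]
          rfl
      | @r K ρ =>
          rw [ih f hf k, orv_rsubst]
          rw [if_neg (Nat.not_lt_zero k)]
          rfl
/-! #### The key impossibility lemma -/

lemma key_arr {S B : NTy}
    (hemp : ∃ s b, NReach (.arr S B) (.arr s b) ∧ Emp s)
    (hpl : ∃ s b, NReach (.arr S B) (.arr s b) ∧ Pl s) : False := by
  obtain ⟨s0, b0, hr0, hE⟩ := hemp
  obtain ⟨s1, b1, hr1, hP⟩ := hpl
  have e0 := reach_arr hr0
  have e1 := reach_arr hr1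
  injection e0 with e0a e0b
  injection e1 with e1a e1b
  subst e0a
  subst e1a
  obtain ⟨f, hrf, hy⟩ := hP
  have hL := hE _ hrf
  have hfalse : (f l0).1 = false := hL l0
  rw [hfalse] at hy
  cases hy

theorem key : ∀ (n : ℕ) (t : NTy), hgt t ≤ n →
    (∀ s b, NReach t (.arr s b) → ¬ Xi s) →
    (∃ s b, NReach t (.arr s b) ∧ Emp s) →
    (∃ s b, NReach t (.arr s b) ∧ Pl s) → False := by
  intro n
  induction n with
  | zero =>
      intro t ht hni hemp hpl
      cases t with
      | arr S B => exact key_arr hemp hpl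
      | tv m => obtain ⟨s, b, hr, _⟩ := hemp; exact nomatch (reach_tv hr)
      | recd f => obtain ⟨s, b, hr, _⟩ := hemp; exact nomatch (reach_recd hr)
      | allR N => simp [hgt] at ht
      | allP N => simp [hgt] at ht
  | succ n ih =>
      intro t ht hni hemp hpl
      cases t with
      | arr S B => exact key_arr hemp hpl
      | tv m => obtain ⟨s, b, hr, _⟩ := hemp; exact nomatch (reach_tv hr)
      | recd f => obtain ⟨s, b, hr, _⟩ := hemp; exact nomatch (reach_recd hr)
      | allP N =>
          obtain ⟨s0, b0, hr0, hE⟩ := hemp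
          obtain ⟨s1, b1, hr1, hP⟩ := hpl
          rcases Relation.ReflTransGen.cases_head hr0 with h' | ⟨y0, hy0, hr0'⟩
          · exact nomatch h'
          rcases Relation.ReflTransGen.cases_head hr1 with h' | ⟨y1, hy1, hr1'⟩
          · exact nomatch h'
          cases hy0 with
          | p c0 =>
          cases hy1 with
          | p c1 =>
          obtain ⟨M, hM1, hM2⟩ := pair_psubst c1 hr1' N rfl
          cases M with
          | arr S' B' =>
              rw [show psubst 0 c1 (NTy.arr S' B')
                  = .arr (psubst 0 c1 S') (psubst 0 c1 B') from rfl] at hM2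
              injection hM2 with h1 h2
              obtain ⟨f, hrf, hfy⟩ := hP
              rw [h1] at hrf
              obtain ⟨Mf, hMf1, hMf2⟩ := pair_psubst c1 hrf S' rfl
              cases Mf with
              | recd fM =>
                  rw [show psubst 0 c1 (NTy.recd fM)
                      = .recd (fun ℓ => psubstPS 0 c1 (fM ℓ)) from rfl] at hMf2
                  injection hMf2 with hf
                  by_cases hyes : (fM l0).1 = true
                  · refine ih (psubst 0 c0 N) ?_ ?_ ⟨s0, b0, hr0', hE⟩ ?_
                    · rw [hgt_psubst]; simp [hgt] at ht; omega
                    · intro s b hr hXi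
                      exact hni s b (Relation.ReflTransGen.head (NStep.p c0) hr) hXi
                    · refine ⟨psubst 0 c0 S', psubst 0 c0 B', forward_psubst c0 hM1, ?_⟩
                      refine ⟨fun ℓ => psubstPS 0 c0 (fM ℓ), forward_psubst c0 hMf1, ?_⟩
                      show ((fM l0).1 || ((fM l0).2.1 0 && c0)) = true
                      rw [hyes]
                      simp
                  · have hyes' : (fM l0).1 = false := by simpa using hyes
                    have hb : (fM l0).2.1 0 = true ∧ c1 = true := by
                      rw [hf] at hfy
                      have h3 : ((fM l0).1 || ((fM l0).2.1 0 && c1)) = true := hfy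
                      rw [hyes'] at h3
                      simpa [Bool.and_eq_true] using h3
                    have hopv : opv S' 0 = true := by
                      rw [← reach_opv hMf1 fM rfl 0]
                      exact hb.1
                    have hXi : Xi s1 := by
                      intro g' f' hr' hf'
                      rw [h1] at hr'
                      obtain ⟨Mf', hMf1', hMf2'⟩ := pair_psubst c1 hr' S' rfl
                      subst hf'
                      cases Mf' with
                      | recd fM' =>
                          rw [show psubst 0 c1 (NTy.recd fM')
                              = .recd (fun ℓ => psubstPS 0 c1 (fM' ℓ)) from rfl] at hMf2'
                          injection hMf2' with hf2
                          have hv : (fM' l0).2.1 0 = true := by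
                            rw [reach_opv hMf1' fM' rfl 0]
                            exact hopv
                          have he : f' l0 = psubstPS 0 c1 (fM' l0) := by rw [hf2]
                          show (f' l0).1 = true
                          rw [he]
                          show ((fM' l0).1 || ((fM' l0).2.1 0 && c1)) = true
                          rw [hv, hb.2]
                          simp
                      | tv m => simp [psubst] at hMf2'
                      | arr a b => simp [psubst] at hMf2'
                      | allR K => simp [psubst] at hMf2'
                      | allP K => simp [psubst] at hMf2'
                    exact hni s1 b1 hr1 hXi
              | tv m => simp [psubst] at hMf2
              | arr a b => simp [psubst] at hMf2
              | allR K => simp [psubst] at hMf2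
              | allP K => simp [psubst] at hMf2
          | tv m => simp [psubst] at hM2
          | recd f => simp [psubst] at hM2
          | allR K => simp [psubst] at hM2
          | allP K => simp [psubst] at hM2
      | allR N =>
          obtain ⟨s0, b0, hr0, hE⟩ := hemp
          obtain ⟨s1, b1, hr1, hP⟩ := hpl
          rcases Relation.ReflTransGen.cases_head hr0 with h' | ⟨y0, hy0, hr0'⟩
          · exact nomatch h'
          rcases Relation.ReflTransGen.cases_head hr1 with h' | ⟨y1, hy1, hr1'⟩
          · exact nomatch h'
          cases hy0 with
          | r ρ0 =>
          cases hy1 with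
          | r ρ1 =>
          obtain ⟨M, hM1, hM2⟩ := pair_rsubst ρ1 hr1' N rfl
          cases M with
          | arr S' B' =>
              rw [show rsubst 0 ρ1 (NTy.arr S' B')
                  = .arr (rsubst 0 ρ1 S') (rsubst 0 ρ1 B') from rfl] at hM2
              injection hM2 with h1 h2
              obtain ⟨f, hrf, hfy⟩ := hP
              rw [h1] at hrf
              obtain ⟨Mf, hMf1, hMf2⟩ := pair_rsubst ρ1 hrf S' rfl
              cases Mf with
              | recd fM =>
                  rw [show rsubst 0 ρ1 (NTy.recd fM)
                      = .recd (fun ℓ => rsubstPS 0 ρ1 ℓ (fM ℓ)) from rfl] at hMf2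
                  injection hMf2 with hf
                  by_cases hyes : (fM l0).1 = true
                  · refine ih (rsubst 0 ρ0 N) ?_ ?_ ⟨s0, b0, hr0', hE⟩ ?_
                    · rw [hgt_rsubst]; simp [hgt] at ht; omega
                    · intro s b hr hXi
                      exact hni s b (Relation.ReflTransGen.head (NStep.r ρ0) hr) hXi
                    · refine ⟨rsubst 0 ρ0 S', rsubst 0 ρ0 B', forward_rsubst ρ0 hM1, ?_⟩
                      refine ⟨fun ℓ => rsubstPS 0 ρ0 ℓ (fM ℓ), forward_rsubst ρ0 hMf1, ?_⟩
                      show ((fM l0).1 || ((fM l0).2.2 0 && ρ0 l0)) = true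
                      rw [hyes]
                      simp
                  · have hyes' : (fM l0).1 = false := by simpa using hyes
                    have hb : (fM l0).2.2 0 = true ∧ ρ1 l0 = true := by
                      rw [hf] at hfy
                      have h3 : ((fM l0).1 || ((fM l0).2.2 0 && ρ1 l0)) = true := hfy
                      rw [hyes'] at h3
                      simpa [Bool.and_eq_true] using h3
                    have horv : orv S' 0 = true := by
                      rw [← reach_orv hMf1 fM rfl 0]
                      exact hb.1
                    have hXi : Xi s1 := by
                      intro g' f' hr' hf'
                      rw [h1] at hr'
                      obtain ⟨Mf', hMf1', hMf2'⟩ := pair_rsubst ρ1 hr' S' rfl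
                      subst hf'
                      cases Mf' with
                      | recd fM' =>
                          rw [show rsubst 0 ρ1 (NTy.recd fM')
                              = .recd (fun ℓ => rsubstPS 0 ρ1 ℓ (fM' ℓ)) from rfl] at hMf2'
                          injection hMf2' with hf2
                          have hv : (fM' l0).2.2 0 = true := by
                            rw [reach_orv hMf1' fM' rfl 0]
                            exact horv
                          have he : f' l0 = rsubstPS 0 ρ1 l0 (fM' l0) := by rw [hf2]
                          show (f' l0).1 = true
                          rw [he]
                          show ((fM' l0).1 || ((fM' l0).2.2 0 && ρ1 l0)) = true
                          rw [hv, hb.2]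
                          simp
                      | tv m => simp [rsubst] at hMf2'
                      | arr a b => simp [rsubst] at hMf2'
                      | allR K => simp [rsubst] at hMf2'
                      | allP K => simp [rsubst] at hMf2'
                    exact hni s1 b1 hr1 hXi
              | tv m => simp [rsubst] at hMf2
              | arr a b => simp [rsubst] at hMf2
              | allR K => simp [rsubst] at hMf2
              | allP K => simp [rsubst] at hMf2
          | tv m => simp [rsubst] at hM2
          | recd f => simp [rsubst] at hM2
          | allR K => simp [rsubst] at hM2
          | allP K => simp [rsubst] at hM2
/-! #### Assembly: source derivations and the main theorem -/

def v0 : Val :=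
  (fun _ => (false, fun _ => false), fun _ _ => (false, fun _ => false, fun _ => false))

lemma v0_closed : ClosedVal v0 :=
  ⟨fun _ _ => rfl, fun _ _ _ => rfl, fun _ _ _ => rfl⟩

def A0 : Ty := .record []
def AF : Ty := .arrow A0 A0
def AL : Ty := .record [(l0, A0)]
def AU : Ty := .arrow AL A0

lemma subA0A0 : Sub A0 A0 :=
  .record (fun ℓ A' h => by simp [List.lookup] at h)
    (fun ℓ A A' h h' => by simp [List.lookup] at h)

lemma subLA : Sub AL A0 :=
  .record (fun ℓ A' h => by simp [List.lookup] at h)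
    (fun ℓ A A' h h' => by simp [List.lookup] at h')

def d1 : Deriv [] (.lam A0 (.var 0)) AF := .lam (.var rfl)
def d2 : Deriv [] (.lam A0 (.record [])) AF := .lam (.record .nil)
def d3 : Deriv [AF, A0] (.app (.var 0) (.var 1)) A0 := .app (.var rfl) (.var rfl)
def d4 : Deriv [] (.record []) A0 := .record .nil
def d5 : Deriv [AF] (.upcast (.var 0) AU) AU :=
  .upcast (.var rfl) (.arrow subLA subA0A0)
def d6 : Deriv [] (.lam AL (.proj (.var 0) l0)) AU :=
  .lam (.proj (.var rfl) (by rfl))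

theorem no_type_only_encoding' :
    ¬ ∃ (trTy : Ty → RTy)
        (trD : ∀ (Γ : List Ty) (M : Tm) (A : Ty), Deriv Γ M A → RTm),
      (∀ Γ M A (d : Deriv Γ M A), RHasTy (Γ.map trTy) (trD Γ M A d) (trTy A)) ∧
      (∀ Γ M A (d : Deriv Γ M A), eraseT (trD Γ M A d) = eraseS M) := by
  rintro ⟨trTy, trD, hty, her⟩
  have S1 : SHT [] (UTm.lam (UTm.var 0)) (den v0 (trTy AF)) := by
    have h := sound (hty [] _ _ d1) v0 v0_closed
    rw [her [] _ _ d1] at h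
    simp only [eraseS] at h
    exact h
  have S2 : SHT [] (UTm.lam (UTm.record [])) (den v0 (trTy AF)) := by
    have h := sound (hty [] _ _ d2) v0 v0_closed
    rw [her [] _ _ d2] at h
    simp only [eraseS, eraseSEs] at h
    exact h
  have S3 : SHT [den v0 (trTy AF), den v0 (trTy A0)]
      (UTm.app (UTm.var 0) (UTm.var 1)) (den v0 (trTy A0)) := by
    have h := sound (hty [AF, A0] _ _ d3) v0 v0_closed
    rw [her [AF, A0] _ _ d3] at h
    simp only [eraseS] at h
    exact h
  have S4 : SHT [] (UTm.record []) (den v0 (trTy A0)) := by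
    have h := sound (hty [] _ _ d4) v0 v0_closed
    rw [her [] _ _ d4] at h
    simp only [eraseS, eraseSEs] at h
    exact h
  have S5 : SHT [den v0 (trTy AF)] (UTm.var 0) (den v0 (trTy AU)) := by
    have h := sound (hty [AF] _ _ d5) v0 v0_closed
    rw [her [AF] _ _ d5] at h
    simp only [eraseS] at h
    exact h
  have S6 : SHT [] (UTm.lam (UTm.proj (UTm.var 0) l0)) (den v0 (trTy AU)) := by
    have h := sound (hty [] _ _ d6) v0 v0_closed
    rw [her [] _ _ d6] at h
    simp only [eraseS] at h
    exact h
  set t := den v0 (trTy AF) with ht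
  set e := den v0 (trTy A0) with he
  set u := den v0 (trTy AU) with hu
  have hEe : Emp e := sht_rec_emp S4 rfl
  have hni : ∀ s b, NReach t (.arr s b) → ¬ Xi s := by
    intro s b hr hXi
    have hb1 : SHT [s] (UTm.var 0) b := sht_lam_inv S1 _ rfl s b hr
    have hcl : Cl s b := sht_var_cl hb1 0 s rfl rfl
    have hXib : Xi b := cl_xi hcl hXi
    have hb2 : SHT [s] (UTm.record []) b := sht_lam_inv S2 _ rfl s b hr
    have hEb : Emp b := sht_rec_emp hb2 rfl
    obtain ⟨g', hg1, hg2⟩ := exists_leaf (hgt b) b (le_refl _)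
    have hleaf := hEb g' hg1
    cases g' with
    | arr a c => exact hleaf
    | tv m => exact hleaf
    | recd f =>
        have hz := hXib _ f hg1 rfl
        rw [hleaf l0] at hz
        cases hz
    | allR K => exact hg2
    | allP K => exact hg2
  have hemp : ∃ s b, NReach t (.arr s b) ∧ Emp s := by
    obtain ⟨s0, b0, hf, ha⟩ := sht_app_inv S3 _ _ rfl
    have hcl : Cl t (.arr s0 b0) := sht_var_cl hf 0 t rfl rfl
    have hr : NReach t (.arr s0 b0) :=
      cl_reach_nb hcl _ Relation.ReflTransGen.refl trivial
    have hcle : Cl e s0 := sht_var_cl ha 1 e rfl rfl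
    exact ⟨s0, b0, hr, cl_emp hcle hEe⟩
  have hpl : ∃ s b, NReach t (.arr s b) ∧ Pl s := by
    have hclu : Cl t u := sht_var_cl S5 0 t rfl rfl
    obtain ⟨g', hg1, hg2⟩ := exists_leaf (hgt u) u (le_refl _)
    have hnl := sht_lam_noleaf S6 _ rfl g' hg1
    cases g' with
    | arr s1 b1 =>
        have hru : NReach t (.arr s1 b1) := cl_reach_nb hclu _ hg1 trivial
        have hb : SHT [s1] (UTm.proj (UTm.var 0) l0) b1 :=
          sht_lam_inv S6 _ rfl s1 b1 hg1
        obtain ⟨f, hw, hy⟩ := sht_proj_inv hb _ _ rfl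
        have hcls : Cl s1 (.recd f) := sht_var_cl hw 0 s1 rfl rfl
        have hreach : NReach s1 (.recd f) :=
          cl_reach_nb hcls _ Relation.ReflTransGen.refl trivial
        exact ⟨s1, b1, hru, f, hreach, hy⟩
    | recd f => exact absurd rfl (hnl.1 f)
    | tv m => exact absurd rfl (hnl.2 m)
    | allR K => exact False.elim hg2
    | allP K => exact False.elim hg2
  exact key (hgt t) t (le_refl _) hni hemp hpl
/-!
STATEMENT 19: There is no type-only translation from λ_{[]}^{≤full} (records
with full subtyping) to λ_{[]}^{ρθ} (records with both row and presence
polymorphism) preserving typing: no translation of derivations that (i) sends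
every derivation of Δ;Γ ⊢ M : A to a target term of type ⟦A⟧ in context ⟦Γ⟧
for a fixed type translation ⟦-⟧, and (ii) is type-only, i.e. the translated
term erases to the erasure of the source term.
-/
theorem no_type_only_encoding :
    ¬ ∃ (trTy : Ty → RTy)
        (trD : ∀ (Γ : List Ty) (M : Tm) (A : Ty), Deriv Γ M A → RTm),
      (∀ Γ M A (d : Deriv Γ M A), RHasTy (Γ.map trTy) (trD Γ M A d) (trTy A)) ∧
      (∀ Γ M A (d : Deriv Γ M A), eraseT (trD Γ M A d) = eraseS M) := by
  exact no_type_only_encoding'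

end Stmt19
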